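/- arXiv:1711.06476 — 5 statements merged into one kernel-verified Lean document; each statement's English description precedes it below -/
import Mathlib

section
/- Let m ≥ 1 be an integer and δ₁ > 0. There exists δ₂ = δ₂(δ₁, m) > 0 such that every locally absolutely continuous u : (0,∞) → ℝ with lim_{r→0+} u(r) = 0, lim_{r→∞} u(r) = 0 and E(u) ≤ 4m − δ₁ satisfies |u(r)| ≤ π − δ₂ for all r > 0. -/
open MeasureTheory Filter Set

/-- Local absolute continuity on `(0,∞)`: the fundamental theorem of calculus holds
on every compact subinterval. -/
def LocAC (u : ℝ → ℝ) : Prop :=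
  ∀ a b : ℝ, 0 < a → a ≤ b →
    IntervalIntegrable (deriv u) volume a b ∧ u b - u a = ∫ r in a..b, deriv u r

/-- The `m`-corotational energy `E(u) = (1/2) ∫₀^∞ (u'² + m² sin²(u)/r²) r dr`. -/
noncomputable def corotE (m : ℕ) (u : ℝ → ℝ) : ℝ :=
  (1/2) * ∫ r in Set.Ioi (0:ℝ), (deriv u r ^ 2 + (m:ℝ)^2 * Real.sin (u r) ^ 2 / r ^ 2) * r

/-! ### Auxiliary: the function `G(x) = ∫₀ˣ m|sin t| dt` -/

noncomputable def Gfun (m : ℕ) (x : ℝ) : ℝ := ∫ t in (0:ℝ)..x, (m:ℝ) * |Real.sin t|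

lemma Gcont (m : ℕ) : Continuous fun t => (m:ℝ) * |Real.sin t| :=
  continuous_const.mul Real.continuous_sin.abs

lemma Gfun_hasDerivAt (m : ℕ) (x : ℝ) : HasDerivAt (Gfun m) ((m:ℝ) * |Real.sin x|) x :=
  ((Gcont m).integral_hasStrictDerivAt 0 x).hasDerivAt

lemma Gfun_continuous (m : ℕ) : Continuous (Gfun m) :=
  continuous_iff_continuousAt.2 fun x => (Gfun_hasDerivAt m x).continuousAt

lemma Gfun_zero (m : ℕ) : Gfun m 0 = 0 := intervalIntegral.integral_same

lemma Gfun_sub (m : ℕ) (x y : ℝ) :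
    Gfun m y - Gfun m x = ∫ t in x..y, (m:ℝ) * |Real.sin t| := by
  have h := intervalIntegral.integral_add_adjacent_intervals
    (a := (0:ℝ)) (b := x) (c := y) (μ := volume) (f := fun t => (m:ℝ) * |Real.sin t|)
    ((Gcont m).intervalIntegrable _ _) ((Gcont m).intervalIntegrable _ _)
  unfold Gfun
  linarith [h]

lemma Gfun_mono (m : ℕ) {x y : ℝ} (h : x ≤ y) : Gfun m x ≤ Gfun m y := by
  have h1 : 0 ≤ Gfun m y - Gfun m x := by
    rw [Gfun_sub]
    exact intervalIntegral.integral_nonneg h fun t _ => by positivity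
  linarith

lemma Gfun_lip (m : ℕ) (x y : ℝ) : |Gfun m y - Gfun m x| ≤ (m:ℝ) * |y - x| := by
  rw [Gfun_sub]
  have := intervalIntegral.norm_integral_le_of_norm_le_const
    (a := x) (b := y) (C := (m:ℝ)) (f := fun t => (m:ℝ) * |Real.sin t|) ?_
  · rw [Real.norm_eq_abs] at this
    exact this
  · intro t _
    rw [Real.norm_eq_abs, abs_mul, Nat.abs_cast, abs_abs]
    exact mul_le_of_le_one_right (Nat.cast_nonneg m) (Real.abs_sin_le_one t)

lemma Gfun_neg (m : ℕ) (x : ℝ) : Gfun m (-x) = - Gfun m x := by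
  have h : (∫ t in x..(0:ℝ), (m:ℝ) * |Real.sin (-t)|)
      = ∫ t in (-0:ℝ)..(-x), (m:ℝ) * |Real.sin t| :=
    intervalIntegral.integral_comp_neg (fun t => (m:ℝ) * |Real.sin t|)
  simp only [Real.sin_neg, abs_neg, neg_zero] at h
  have h2 : Gfun m 0 - Gfun m x = ∫ t in x..(0:ℝ), (m:ℝ) * |Real.sin t| := Gfun_sub m x 0
  have h3 : Gfun m (-x) - Gfun m 0 = ∫ t in (0:ℝ)..(-x), (m:ℝ) * |Real.sin t| := Gfun_sub m 0 (-x)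
  rw [Gfun_zero] at h2 h3
  linarith [h, h2, h3]

lemma Gfun_abs (m : ℕ) (x : ℝ) : Gfun m |x| = |Gfun m x| := by
  rcases le_or_gt 0 x with hx | hx
  · rw [abs_of_nonneg hx, abs_of_nonneg]
    have := Gfun_mono m hx
    rw [Gfun_zero] at this
    exact this
  · rw [abs_of_neg hx]
    have h1 : Gfun m x = - Gfun m (-x) := by rw [Gfun_neg]; ring
    have h2 : 0 ≤ Gfun m (-x) := (Gfun_zero m) ▸ Gfun_mono m (by linarith)
    rw [h1, abs_neg, abs_of_nonneg h2]

lemma Gfun_eq (m : ℕ) {x : ℝ} (h0 : 0 ≤ x) (hπ : x ≤ Real.pi) :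
    Gfun m x = (m:ℝ) * (1 - Real.cos x) := by
  have : Gfun m x = ∫ t in (0:ℝ)..x, (m:ℝ) * Real.sin t := by
    apply intervalIntegral.integral_congr
    intro t ht
    rw [uIcc_of_le h0] at ht
    simp only
    rw [abs_of_nonneg (Real.sin_nonneg_of_nonneg_of_le_pi ht.1 (ht.2.trans hπ))]
  rw [this, intervalIntegral.integral_const_mul, integral_sin, Real.cos_zero]

lemma abs_sin_sub_sin (a b : ℝ) : |Real.sin a - Real.sin b| ≤ |a - b| := by
  rw [Real.sin_sub_sin]
  calc |2 * Real.sin ((a - b) / 2) * Real.cos ((a + b) / 2)|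
      = 2 * |Real.sin ((a - b) / 2)| * |Real.cos ((a + b) / 2)| := by
        rw [abs_mul, abs_mul]; norm_num
    _ ≤ 2 * |(a - b) / 2| * 1 := by
        apply mul_le_mul _ (Real.abs_cos_le_one _) (abs_nonneg _) (by positivity)
        exact mul_le_mul_of_nonneg_left (Real.abs_sin_le_abs) (by norm_num)
    _ = |a - b| := by rw [abs_div, abs_two]; ring

lemma ucontOn (u : ℝ → ℝ) (hu : LocAC u) {a b : ℝ} (ha : 0 < a) (hab : a ≤ b) :
    ContinuousOn u (Icc a b) := by
  have hgi : IntervalIntegrable (deriv u) volume a b := (hu a b ha hab).1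
  have hc : ContinuousOn (fun x => u a + ∫ t in a..x, deriv u t) (Icc a b) := by
    have h := intervalIntegral.continuousOn_primitive_interval' hgi
      (a := a) (by rw [uIcc_of_le hab]; exact ⟨le_rfl, hab⟩)
    rw [uIcc_of_le hab] at h
    exact continuousOn_const.add h
  apply hc.congr
  intro x hx
  have h2 := (hu a x ha hx.1).2
  simp only
  linarith

lemma phi_integrable (m : ℕ) (u : ℝ → ℝ) (hu : LocAC u) {a b : ℝ} (ha : 0 < a) (hab : a ≤ b) :
    IntegrableOn (fun s => (m:ℝ) * |Real.sin (u s)| * |deriv u s|) (Ioc a b) := by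
  have hgi : IntegrableOn (deriv u) (Ioc a b) := ((hu a b ha hab).1).1
  have hucont := (ucontOn u hu ha hab).mono Ioc_subset_Icc_self
  have h1 : ContinuousOn (fun s => (m:ℝ) * |Real.sin (u s)|) (Ioc a b) :=
    continuousOn_const.mul (Real.continuous_sin.comp_continuousOn hucont).abs
  have h2 : AEStronglyMeasurable (fun s => |deriv u s|) (volume.restrict (Ioc a b)) :=
    ((measurable_deriv u).abs).aestronglyMeasurable
  have hgdom : IntegrableOn (fun s => (m:ℝ) * |deriv u s|) (Ioc a b) :=
    (hgi.abs).const_mul _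
  refine hgdom.mono' ((h1.aestronglyMeasurable measurableSet_Ioc).mul h2)
    (Eventually.of_forall fun s => ?_)
  rw [Real.norm_eq_abs, abs_of_nonneg (by positivity)]
  have hs1 : |Real.sin (u s)| ≤ 1 := Real.abs_sin_le_one _
  calc (m:ℝ) * |Real.sin (u s)| * |deriv u s| ≤ (m:ℝ) * 1 * |deriv u s| :=
        mul_le_mul_of_nonneg_right
          (mul_le_mul_of_nonneg_left hs1 (Nat.cast_nonneg m)) (abs_nonneg _)
    _ = (m:ℝ) * |deriv u s| := by ring

lemma key_ineq (m : ℕ) (u : ℝ → ℝ) (hu : LocAC u) {a b : ℝ} (ha : 0 < a) (hab : a ≤ b) :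
    |Gfun m (u b) - Gfun m (u a)| ≤ ∫ s in a..b, (m:ℝ) * |Real.sin (u s)| * |deriv u s| := by
  have hgi : IntegrableOn (deriv u) (Ioc a b) := ((hu a b ha hab).1).1
  set g := deriv u with hg
  set f : ℝ → ℝ := (Ioc a b).indicator g with hf
  have hf_int : Integrable f volume := hgi.integrable_indicator measurableSet_Ioc
  set C : ℝ := ∫ s in Ioc a b, |g s| with hC
  have hC0 : 0 ≤ C := setIntegral_nonneg measurableSet_Ioc (fun s _ => abs_nonneg _)
  set K : ℝ := (m:ℝ) * (2 + C) + 1 with hK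
  have hK0 : 0 < K := by positivity
  apply le_of_forall_pos_le_add
  intro ε hε
  set ε' : ℝ := ε / K with hε'def
  have hε'0 : 0 < ε' := div_pos hε hK0
  obtain ⟨k, hk_supp, hk_dist, hk_cont, hk_int⟩ :=
    hf_int.exists_hasCompactSupport_integral_sub_le hε'0
  set v : ℝ → ℝ := fun x => u a + ∫ t in a..x, k t with hv
  have hv_deriv : ∀ x, HasDerivAt v (k x) x := fun x =>
    ((hk_cont.integral_hasStrictDerivAt a x).hasDerivAt).const_add (u a)
  have hv_cont : Continuous v := continuous_iff_continuousAt.2 fun x => (hv_deriv x).continuousAt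
  have hva : v a = u a := by simp [hv]
  have hftc : ∀ x ∈ Icc a b, u x = u a + ∫ t in a..x, f t := by
    intro x hx
    have h1 : u x - u a = ∫ t in a..x, g t := (hu a x ha hx.1).2
    have h2 : (∫ t in a..x, f t) = ∫ t in a..x, g t := by
      rw [intervalIntegral.integral_of_le hx.1, intervalIntegral.integral_of_le hx.1]
      apply setIntegral_congr_fun measurableSet_Ioc
      intro s hs
      have hs' : s ∈ Ioc a b := ⟨hs.1, hs.2.trans hx.2⟩
      show (Ioc a b).indicator g s = g s
      exact Set.indicator_of_mem hs' g
    linarith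
  have hdiff : ∀ x ∈ Icc a b, |u x - v x| ≤ ε' := by
    intro x hx
    have h1 := hftc x hx
    have h2 : u x - v x = ∫ t in a..x, (f t - k t) := by
      rw [intervalIntegral.integral_sub hf_int.intervalIntegrable hk_int.intervalIntegrable, h1]
      simp only [hv]
      ring
    rw [h2]
    calc |∫ t in a..x, (f t - k t)| ≤ ∫ t in a..x, |f t - k t| :=
          intervalIntegral.abs_integral_le_integral_abs hx.1
      _ = ∫ t in Ioc a x, |f t - k t| := intervalIntegral.integral_of_le hx.1
      _ ≤ ∫ t, |f t - k t| := setIntegral_le_integral ((hf_int.sub hk_int).abs)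
          (Eventually.of_forall fun t => abs_nonneg _)
      _ ≤ ε' := by simpa [Real.norm_eq_abs] using hk_dist
  have hGV : Gfun m (v b) - Gfun m (v a) = ∫ x in a..b, (m:ℝ) * |Real.sin (v x)| * k x := by
    have hderiv : ∀ x ∈ uIcc a b,
        HasDerivAt (fun y => Gfun m (v y)) ((m:ℝ) * |Real.sin (v x)| * k x) x := by
      intro x _
      have := (Gfun_hasDerivAt m (v x)).comp x (hv_deriv x)
      exact this
    exact (intervalIntegral.integral_eq_sub_of_hasDerivAt hderiv
      (((continuous_const.mul (Real.continuous_sin.comp hv_cont).abs).mul hk_cont).intervalIntegrable a b)).symm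
  -- pointwise comparison on `Ioc a b`
  have hpt : ∀ x ∈ Ioc a b, (m:ℝ) * |Real.sin (v x)| * |k x|
      ≤ (m:ℝ) * |Real.sin (u x)| * |g x| + (m:ℝ) * |k x - f x| + (m:ℝ) * ε' * |g x| := by
    intro x hx
    have hfx : f x = g x := Set.indicator_of_mem hx g
    have habs : |f x| = |g x| := by rw [hfx]
    have hsv1 : |Real.sin (v x)| ≤ 1 := Real.abs_sin_le_one _
    have hsin : |Real.sin (v x)| ≤ |Real.sin (u x)| + ε' := by
      have h3 : |Real.sin (v x) - Real.sin (u x)| ≤ |v x - u x| := abs_sin_sub_sin _ _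
      have h4 : |v x - u x| ≤ ε' := by rw [abs_sub_comm]; exact hdiff x ⟨hx.1.le, hx.2⟩
      have h5 : |Real.sin (v x)| ≤ |Real.sin (u x)| + |Real.sin (v x) - Real.sin (u x)| := by
        have := abs_add_le (Real.sin (u x)) (Real.sin (v x) - Real.sin (u x))
        simpa using this
      linarith
    have hk1 : |k x| ≤ |f x| + |k x - f x| := by
      have h6 : f x + (k x - f x) = k x := by ring
      calc |k x| = |f x + (k x - f x)| := by rw [h6]
        _ ≤ |f x| + |k x - f x| := abs_add_le _ _
    calc (m:ℝ) * |Real.sin (v x)| * |k x|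
        ≤ (m:ℝ) * |Real.sin (v x)| * (|f x| + |k x - f x|) :=
          mul_le_mul_of_nonneg_left hk1 (by positivity)
      _ = (m:ℝ) * |Real.sin (v x)| * |f x| + (m:ℝ) * |Real.sin (v x)| * |k x - f x| := by ring
      _ ≤ (m:ℝ) * (|Real.sin (u x)| + ε') * |f x| + (m:ℝ) * 1 * |k x - f x| := by
          refine add_le_add ?_ ?_
          · exact mul_le_mul_of_nonneg_right
              (mul_le_mul_of_nonneg_left hsin (Nat.cast_nonneg m)) (abs_nonneg _)
          · exact mul_le_mul_of_nonneg_right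
              (mul_le_mul_of_nonneg_left hsv1 (Nat.cast_nonneg m)) (abs_nonneg _)
      _ = (m:ℝ) * |Real.sin (u x)| * |g x| + (m:ℝ) * |k x - f x| + (m:ℝ) * ε' * |g x| := by
          rw [habs]; ring
  -- integrabilities over `Ioc a b`
  have hφint : IntegrableOn (fun s => (m:ℝ) * |Real.sin (u s)| * |deriv u s|) (Ioc a b) :=
    phi_integrable m u hu ha hab
  have hkf_int : IntegrableOn (fun x => (m:ℝ) * |k x - f x|) (Ioc a b) :=
    (((hk_int.sub hf_int).abs).const_mul ((m:ℝ))).integrableOn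
  have hg3 : IntegrableOn (fun x => (m:ℝ) * ε' * |g x|) (Ioc a b) :=
    (hgi.abs).const_mul _
  have hlhs_int : IntegrableOn (fun x => (m:ℝ) * |Real.sin (v x)| * |k x|) (Ioc a b) :=
    ((continuous_const.mul (Real.continuous_sin.comp hv_cont).abs).mul hk_cont.abs).integrableOn_Ioc
  -- integral comparison
  have hint_cmp : (∫ x in Ioc a b, (m:ℝ) * |Real.sin (v x)| * |k x|)
      ≤ (∫ s in Ioc a b, (m:ℝ) * |Real.sin (u s)| * |deriv u s|) + (m:ℝ) * ε' + (m:ℝ) * ε' * C := by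
    have h7 : (∫ x in Ioc a b, (m:ℝ) * |Real.sin (v x)| * |k x|)
        ≤ ∫ x in Ioc a b, ((m:ℝ) * |Real.sin (u x)| * |g x| + (m:ℝ) * |k x - f x|
            + (m:ℝ) * ε' * |g x|) := by
      refine setIntegral_mono_on hlhs_int ((hφint.add hkf_int).add hg3) measurableSet_Ioc hpt
    have h8 : (∫ x in Ioc a b, ((m:ℝ) * |Real.sin (u x)| * |g x| + (m:ℝ) * |k x - f x|
            + (m:ℝ) * ε' * |g x|))
        = (∫ s in Ioc a b, (m:ℝ) * |Real.sin (u s)| * |deriv u s|)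
          + (∫ x in Ioc a b, (m:ℝ) * |k x - f x|) + ∫ x in Ioc a b, (m:ℝ) * ε' * |g x| := by
      have hAB : IntegrableOn
          (fun x => (m:ℝ) * |Real.sin (u x)| * |g x| + (m:ℝ) * |k x - f x|) (Ioc a b) :=
        hφint.add hkf_int
      rw [integral_add hAB hg3, integral_add hφint hkf_int]
    have h9 : (∫ x in Ioc a b, (m:ℝ) * |k x - f x|) ≤ (m:ℝ) * ε' := by
      rw [integral_const_mul]
      refine mul_le_mul_of_nonneg_left ?_ (Nat.cast_nonneg m)
      calc (∫ x in Ioc a b, |k x - f x|) ≤ ∫ x, |k x - f x| :=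
            setIntegral_le_integral ((hk_int.sub hf_int).abs)
              (Eventually.of_forall fun t => abs_nonneg _)
        _ ≤ ε' := by
            have : ∀ x, |k x - f x| = ‖f x - k x‖ := fun x => by
              rw [Real.norm_eq_abs, abs_sub_comm]
            simp_rw [this]
            exact hk_dist
    have h10 : (∫ x in Ioc a b, (m:ℝ) * ε' * |g x|) = (m:ℝ) * ε' * C := by
      rw [hC, integral_const_mul]
    linarith
  -- final assembly
  have hub : |Gfun m (u b) - Gfun m (v b)| ≤ (m:ℝ) * ε' :=
    (Gfun_lip m (v b) (u b)).trans
      (mul_le_mul_of_nonneg_left (hdiff b ⟨hab, le_rfl⟩) (Nat.cast_nonneg m))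
  have hmain : |∫ x in a..b, (m:ℝ) * |Real.sin (v x)| * k x|
      ≤ ∫ x in Ioc a b, (m:ℝ) * |Real.sin (v x)| * |k x| := by
    calc |∫ x in a..b, (m:ℝ) * |Real.sin (v x)| * k x|
        ≤ ∫ x in a..b, |(m:ℝ) * |Real.sin (v x)| * k x| :=
          intervalIntegral.abs_integral_le_integral_abs hab
      _ = ∫ x in a..b, (m:ℝ) * |Real.sin (v x)| * |k x| := by
          congr 1; funext x; rw [abs_mul, abs_mul, Nat.abs_cast, abs_abs]
      _ = ∫ x in Ioc a b, (m:ℝ) * |Real.sin (v x)| * |k x| :=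
          intervalIntegral.integral_of_le hab
  have htri : |Gfun m (u b) - Gfun m (u a)|
      ≤ |Gfun m (u b) - Gfun m (v b)| + |Gfun m (v b) - Gfun m (u a)| :=
    abs_sub_le _ _ _
  have heq : |Gfun m (v b) - Gfun m (u a)| = |∫ x in a..b, (m:ℝ) * |Real.sin (v x)| * k x| := by
    rw [← hva, hGV]
  have herr : (m:ℝ) * ε' + ((m:ℝ) * ε' + (m:ℝ) * ε' * C) ≤ ε := by
    have h11 : ε' * K = ε := div_mul_cancel₀ ε (ne_of_gt hK0)
    have h12 : ε' * ((m:ℝ) * (2 + C)) ≤ ε' * K := by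
      refine mul_le_mul_of_nonneg_left ?_ hε'0.le
      rw [hK]; linarith
    nlinarith
  have hIoc : (∫ s in a..b, (m:ℝ) * |Real.sin (u s)| * |deriv u s|)
      = ∫ s in Ioc a b, (m:ℝ) * |Real.sin (u s)| * |deriv u s| :=
    intervalIntegral.integral_of_le hab
  rw [hIoc]
  calc |Gfun m (u b) - Gfun m (u a)|
      ≤ (m:ℝ) * ε' + |∫ x in a..b, (m:ℝ) * |Real.sin (v x)| * k x| := by
        rw [← heq]; linarith
    _ ≤ (m:ℝ) * ε' + ((∫ s in Ioc a b, (m:ℝ) * |Real.sin (u s)| * |deriv u s|)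
          + (m:ℝ) * ε' + (m:ℝ) * ε' * C) := by linarith [hmain.trans hint_cmp]
    _ ≤ (∫ s in Ioc a b, (m:ℝ) * |Real.sin (u s)| * |deriv u s|) + ε := by linarith

lemma half_bound (m : ℕ) (u : ℝ → ℝ) (hu : LocAC u)
    (hint : IntegrableOn
      (fun r => (deriv u r ^ 2 + (m:ℝ)^2 * Real.sin (u r) ^ 2 / r ^ 2) * r) (Set.Ioi (0:ℝ)))
    {a b : ℝ} (ha : 0 < a) (hab : a ≤ b) :
    (∫ s in a..b, (m:ℝ) * |Real.sin (u s)| * |deriv u s|)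
      ≤ (1/2) * ∫ s in Ioc a b,
          (deriv u s ^ 2 + (m:ℝ)^2 * Real.sin (u s) ^ 2 / s ^ 2) * s := by
  rw [intervalIntegral.integral_of_le hab]
  have hdint : IntegrableOn
      (fun s => (deriv u s ^ 2 + (m:ℝ)^2 * Real.sin (u s) ^ 2 / s ^ 2) * s) (Ioc a b) :=
    hint.mono_set (fun s hs => ha.trans hs.1)
  have hmono : (∫ s in Ioc a b, (m:ℝ) * |Real.sin (u s)| * |deriv u s|)
      ≤ ∫ s in Ioc a b,
          (1/2) * ((deriv u s ^ 2 + (m:ℝ)^2 * Real.sin (u s) ^ 2 / s ^ 2) * s) := by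
    refine setIntegral_mono_on (phi_integrable m u hu ha hab) (hdint.const_mul _)
      measurableSet_Ioc ?_
    intro s hs
    have hs0 : (0:ℝ) < s := ha.trans hs.1
    have key2 : 2 * ((m:ℝ) * |Real.sin (u s)| * |deriv u s|) * s
        ≤ deriv u s ^ 2 * s ^ 2 + (m:ℝ)^2 * Real.sin (u s) ^ 2 := by
      nlinarith [sq_nonneg (|deriv u s| * s - (m:ℝ) * |Real.sin (u s)|),
        sq_abs (deriv u s), sq_abs (Real.sin (u s)), abs_nonneg (deriv u s),
        abs_nonneg (Real.sin (u s)), (Nat.cast_nonneg m : (0:ℝ) ≤ (m:ℝ)), hs0]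
    have hrw : (deriv u s ^ 2 + (m:ℝ)^2 * Real.sin (u s) ^ 2 / s ^ 2) * s
        = (deriv u s ^ 2 * s ^ 2 + (m:ℝ)^2 * Real.sin (u s) ^ 2) / s := by
      field_simp
    rw [hrw, show (1:ℝ)/2 * ((deriv u s ^ 2 * s ^ 2 + (m:ℝ)^2 * Real.sin (u s) ^ 2) / s)
      = (deriv u s ^ 2 * s ^ 2 + (m:ℝ)^2 * Real.sin (u s) ^ 2) / (2*s) by ring,
      le_div_iff₀ (by linarith : (0:ℝ) < 2*s)]
    linarith [key2]
  calc (∫ s in Ioc a b, (m:ℝ) * |Real.sin (u s)| * |deriv u s|)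
      ≤ ∫ s in Ioc a b,
          (1/2) * ((deriv u s ^ 2 + (m:ℝ)^2 * Real.sin (u s) ^ 2 / s ^ 2) * s) := hmono
    _ = (1/2) * ∫ s in Ioc a b,
          (deriv u s ^ 2 + (m:ℝ)^2 * Real.sin (u s) ^ 2 / s ^ 2) * s := integral_const_mul _ _

theorem pointwise_bound_below_threshold
    (m : ℕ) (hm : 1 ≤ m) (δ₁ : ℝ) (hδ₁ : 0 < δ₁) :
    ∃ δ₂ : ℝ, 0 < δ₂ ∧
      ∀ u : ℝ → ℝ, LocAC u →
        Tendsto u (nhdsWithin 0 (Set.Ioi 0)) (nhds 0) →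
        Tendsto u atTop (nhds 0) →
        IntegrableOn
          (fun r => (deriv u r ^ 2 + (m:ℝ)^2 * Real.sin (u r) ^ 2 / r ^ 2) * r)
          (Set.Ioi (0:ℝ)) →
        corotE m u ≤ 4 * m - δ₁ →
        ∀ r > (0:ℝ), |u r| ≤ Real.pi - δ₂ := by
  have hm0 : (0:ℝ) < (m:ℝ) := by exact_mod_cast Nat.lt_of_lt_of_le Nat.zero_lt_one hm
  set q : ℝ := min (δ₁ / (4*(m:ℝ))) 1 with hqdef
  have hq0 : 0 < q := lt_min (by positivity) one_pos
  have hq1 : q ≤ 1 := min_le_right _ _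
  set δ₂ : ℝ := Real.arccos (1 - q) with hδ₂def
  have hδ₂0 : 0 < δ₂ := Real.arccos_pos.2 (by linarith)
  have hcos : Real.cos δ₂ = 1 - q := Real.cos_arccos (by linarith) (by linarith)
  have hδ₂le : δ₂ ≤ Real.pi / 2 := Real.arccos_le_pi_div_two.2 (by linarith)
  refine ⟨δ₂, hδ₂0, ?_⟩
  intro u hu h0 hinf hint hE r hr
  have hdens_nonneg : ∀ s : ℝ, 0 < s →
      0 ≤ (deriv u s ^ 2 + (m:ℝ)^2 * Real.sin (u s) ^ 2 / s ^ 2) * s := by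
    intro s hs
    positivity
  have hIl : IntegrableOn
      (fun s => (deriv u s ^ 2 + (m:ℝ)^2 * Real.sin (u s) ^ 2 / s ^ 2) * s) (Ioc 0 r) :=
    hint.mono_set Ioc_subset_Ioi_self
  have hIr : IntegrableOn
      (fun s => (deriv u s ^ 2 + (m:ℝ)^2 * Real.sin (u s) ^ 2 / s ^ 2) * s) (Ioi r) :=
    hint.mono_set (Ioi_subset_Ioi hr.le)
  -- left bound
  have hleft : |Gfun m (u r)| ≤ (1/2) * ∫ s in Ioc (0:ℝ) r,
      (deriv u s ^ 2 + (m:ℝ)^2 * Real.sin (u s) ^ 2 / s ^ 2) * s := by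
    have hev : ∀ᶠ a in nhdsWithin 0 (Ioi 0), |Gfun m (u r) - Gfun m (u a)|
        ≤ (1/2) * ∫ s in Ioc (0:ℝ) r,
            (deriv u s ^ 2 + (m:ℝ)^2 * Real.sin (u s) ^ 2 / s ^ 2) * s := by
      filter_upwards [Ioo_mem_nhdsGT_of_mem (⟨le_refl (0:ℝ), hr⟩ : (0:ℝ) ∈ Ico (0:ℝ) r)]
      intro a ha
      have h1 := key_ineq m u hu ha.1 ha.2.le
      have h2 := half_bound m u hu hint ha.1 ha.2.le
      have h3 : (∫ s in Ioc a r, (deriv u s ^ 2 + (m:ℝ)^2 * Real.sin (u s) ^ 2 / s ^ 2) * s)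
          ≤ ∫ s in Ioc (0:ℝ) r, (deriv u s ^ 2 + (m:ℝ)^2 * Real.sin (u s) ^ 2 / s ^ 2) * s :=
        setIntegral_mono_set hIl
          ((ae_restrict_iff' measurableSet_Ioc).mpr
            (Eventually.of_forall fun s hs => hdens_nonneg s hs.1))
          (HasSubset.Subset.eventuallyLE (Ioc_subset_Ioc_left ha.1.le))
      linarith
    have htend : Tendsto (fun a => |Gfun m (u r) - Gfun m (u a)|) (nhdsWithin 0 (Ioi 0))
        (nhds |Gfun m (u r) - Gfun m 0|) := by
      have hcomp : Tendsto (fun a => Gfun m (u a)) (nhdsWithin 0 (Ioi 0)) (nhds (Gfun m 0)) :=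
        ((Gfun_continuous m).continuousAt.tendsto).comp h0
      exact (tendsto_const_nhds.sub hcomp).abs
    have := le_of_tendsto htend hev
    simpa [Gfun_zero] using this
  -- right bound
  have hright : |Gfun m (u r)| ≤ (1/2) * ∫ s in Ioi r,
      (deriv u s ^ 2 + (m:ℝ)^2 * Real.sin (u s) ^ 2 / s ^ 2) * s := by
    have hev : ∀ᶠ b in atTop, |Gfun m (u b) - Gfun m (u r)|
        ≤ (1/2) * ∫ s in Ioi r,
            (deriv u s ^ 2 + (m:ℝ)^2 * Real.sin (u s) ^ 2 / s ^ 2) * s := by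
      filter_upwards [eventually_ge_atTop r] with b hb
      have h1 := key_ineq m u hu hr hb
      have h2 := half_bound m u hu hint hr hb
      have h3 : (∫ s in Ioc r b, (deriv u s ^ 2 + (m:ℝ)^2 * Real.sin (u s) ^ 2 / s ^ 2) * s)
          ≤ ∫ s in Ioi r, (deriv u s ^ 2 + (m:ℝ)^2 * Real.sin (u s) ^ 2 / s ^ 2) * s :=
        setIntegral_mono_set hIr
          ((ae_restrict_iff' measurableSet_Ioi).mpr
            (Eventually.of_forall fun s hs => hdens_nonneg s (hr.trans hs)))
          (HasSubset.Subset.eventuallyLE Ioc_subset_Ioi_self)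
      linarith
    have htend : Tendsto (fun b => |Gfun m (u b) - Gfun m (u r)|) atTop
        (nhds |Gfun m 0 - Gfun m (u r)|) := by
      have hcomp : Tendsto (fun b => Gfun m (u b)) atTop (nhds (Gfun m 0)) :=
        ((Gfun_continuous m).continuousAt.tendsto).comp hinf
      exact (hcomp.sub tendsto_const_nhds).abs
    have := le_of_tendsto htend hev
    simpa [Gfun_zero] using this
  -- combine
  have hsplit : (∫ s in Ioi (0:ℝ), (deriv u s ^ 2 + (m:ℝ)^2 * Real.sin (u s) ^ 2 / s ^ 2) * s)
      = (∫ s in Ioc (0:ℝ) r, (deriv u s ^ 2 + (m:ℝ)^2 * Real.sin (u s) ^ 2 / s ^ 2) * s)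
        + ∫ s in Ioi r, (deriv u s ^ 2 + (m:ℝ)^2 * Real.sin (u s) ^ 2 / s ^ 2) * s := by
    rw [← setIntegral_union (Ioc_disjoint_Ioi le_rfl) measurableSet_Ioi hIl hIr,
      Ioc_union_Ioi_eq_Ioi hr.le]
  have hE' : (1/2) * (∫ s in Ioi (0:ℝ),
      (deriv u s ^ 2 + (m:ℝ)^2 * Real.sin (u s) ^ 2 / s ^ 2) * s) ≤ 4*(m:ℝ) - δ₁ := hE
  have hG : 2 * |Gfun m (u r)| ≤ 4*(m:ℝ) - δ₁ := by
    rw [hsplit] at hE'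
    linarith
  -- conclude
  by_contra hcon
  push_neg at hcon
  have h1 : Gfun m (Real.pi - δ₂) ≤ Gfun m |u r| := Gfun_mono m hcon.le
  rw [Gfun_abs] at h1
  have hπ0 : 0 ≤ Real.pi - δ₂ := by linarith [Real.pi_pos]
  have h2 : Gfun m (Real.pi - δ₂) = (m:ℝ) * (1 - Real.cos (Real.pi - δ₂)) :=
    Gfun_eq m hπ0 (by linarith)
  rw [Real.cos_pi_sub, hcos] at h2
  have hq2 : Gfun m (Real.pi - δ₂) = 2*(m:ℝ) - (m:ℝ)*q := by rw [h2]; ring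
  have h3 : (m:ℝ) * q ≤ δ₁ / 4 := by
    have hmin := min_le_left (δ₁ / (4*(m:ℝ))) 1
    calc (m:ℝ) * q ≤ (m:ℝ) * (δ₁/(4*(m:ℝ))) := mul_le_mul_of_nonneg_left hmin hm0.le
      _ = δ₁ / 4 := by field_simp
  linarith [h1, hG, hq2, h3]
end

section
/- Let m ≥ 1 be an integer and let u : (0,∞) → ℝ be locally absolutely continuous with finite energy E(u) < ∞, such that the limits a = lim_{r→0+} u(r) and b = lim_{r→∞} u(r) exist. Then E(u) = (1/2) ∫₀^∞ (u'(r) + (m/r) sin(u(r)))² r dr + m (cos b − cos a); in particular E(u) ≥ m |cos b − cos a|. -/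
open MeasureTheory Filter Set
open Topology

private lemma abs_sin_sub_sin_le (x y : ℝ) : |Real.sin x - Real.sin y| ≤ |x - y| := by
  rw [Real.sin_sub_sin]
  have h1 := Real.abs_sin_le_abs (x := (x - y) / 2)
  have h2 := Real.abs_cos_le_one ((x + y) / 2)
  have h3 : |(x - y) / 2| = |x - y| / 2 := by
    rw [abs_div]; norm_num
  rw [abs_mul, abs_mul]
  rw [h3] at h1
  have h4 : |(2:ℝ)| = 2 := by norm_num
  rw [h4]
  nlinarith [abs_nonneg (Real.sin ((x - y) / 2)), abs_nonneg (Real.cos ((x + y) / 2)),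
    abs_nonneg (x - y)]

private lemma abs_cos_sub_cos_le (x y : ℝ) : |Real.cos x - Real.cos y| ≤ |x - y| := by
  rw [Real.cos_sub_cos]
  have h1 := Real.abs_sin_le_abs (x := (x - y) / 2)
  have h2 := Real.abs_sin_le_one ((x + y) / 2)
  have h3 : |(x - y) / 2| = |x - y| / 2 := by
    rw [abs_div]; norm_num
  rw [abs_mul, abs_mul]
  rw [h3] at h1
  have h4 : |(-2:ℝ)| = 2 := by norm_num
  rw [h4]
  nlinarith [abs_nonneg (Real.sin ((x - y) / 2)), abs_nonneg (Real.sin ((x + y) / 2)),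
    abs_nonneg (x - y)]

/-- FTC for `r ↦ -cos (u r)` where `u` is a primitive of an integrable function `h`,
proved by approximating `h` with continuous functions. -/
private lemma ftc_sin {h : ℝ → ℝ} {ε R c : ℝ} (hεR : ε ≤ R)
    (hInt : IntervalIntegrable h volume ε R) {u : ℝ → ℝ}
    (hu : ∀ t ∈ Icc ε R, u t = c + ∫ r in ε..t, h r) :
    ∫ r in Ioc ε R, h r * Real.sin (u r) = Real.cos (u ε) - Real.cos (u R) := by
  have hIoc : IntegrableOn h (Ioc ε R) :=
    (intervalIntegrable_iff_integrableOn_Ioc_of_le hεR).1 hInt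
  -- continuity of u on Icc ε R
  have hprim : ContinuousOn (fun t => c + ∫ r in ε..t, h r) (Icc ε R) := by
    have := intervalIntegral.continuousOn_primitive_interval'
      (μ := volume) (f := h) (b₁ := ε) (b₂ := R) (a := ε) hInt left_mem_uIcc
    rw [uIcc_of_le hεR] at this
    exact continuousOn_const.add this
  have hucont : ContinuousOn u (Icc ε R) := hprim.congr hu
  have hsm : AEStronglyMeasurable (fun r => Real.sin (u r)) (volume.restrict (Ioc ε R)) :=
    ((Real.continuous_sin.comp_continuousOn hucont).mono Ioc_subset_Icc_self).aestronglyMeasurable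
      measurableSet_Ioc
  have hGint : IntegrableOn (fun r => h r * Real.sin (u r)) (Ioc ε R) := by
    have := hIoc.bdd_mul hsm (c := 1) (Eventually.of_forall fun x => by
      simpa [Real.norm_eq_abs] using Real.abs_sin_le_one (u x))
    exact this.congr (Eventually.of_forall fun x => mul_comm _ _)
  set M := ∫ r in Ioc ε R, |h r| with hMdef
  have hM0 : 0 ≤ M := integral_nonneg fun _ => abs_nonneg _
  have huε : u ε = c := by simpa using hu ε ⟨le_rfl, hεR⟩
  set X := (∫ r in Ioc ε R, h r * Real.sin (u r)) - (Real.cos (u ε) - Real.cos (u R)) with hXdef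
  have hX : ∀ δ : ℝ, 0 < δ → δ ≤ 1 → |X| ≤ δ * (3 + M) := by
    intro δ hδ hδ1
    -- approximate the indicator extension of h by a continuous function
    have hh' : Integrable ((Ioc ε R).indicator h) volume :=
      hIoc.integrable_indicator measurableSet_Ioc
    obtain ⟨g, -, hgδ, hgcont, hgint⟩ := hh'.exists_hasCompactSupport_integral_sub_le hδ
    have hsub_int : Integrable (fun x => (Ioc ε R).indicator h x - g x) volume := hh'.sub hgint
    -- the L¹ error over any subinterval is ≤ δ
    have key : ∀ t, ε ≤ t → t ≤ R → ∫ r in Ioc ε t, |h r - g r| ≤ δ := by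
      intro t htl htr
      have h1 : ∫ r in Ioc ε t, |h r - g r|
          = ∫ r in Ioc ε t, ‖(Ioc ε R).indicator h r - g r‖ := by
        refine setIntegral_congr_fun measurableSet_Ioc fun r hr => ?_
        have hrR : r ∈ Ioc ε R := ⟨hr.1, hr.2.trans htr⟩
        rw [indicator_of_mem hrR, Real.norm_eq_abs]
      rw [h1]
      calc ∫ r in Ioc ε t, ‖(Ioc ε R).indicator h r - g r‖
          ≤ ∫ r, ‖(Ioc ε R).indicator h r - g r‖ :=
            setIntegral_le_integral hsub_int.norm
              (Eventually.of_forall fun r => norm_nonneg _)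
        _ ≤ δ := hgδ
    -- the comparison primitive
    set v : ℝ → ℝ := fun t => c + ∫ r in ε..t, g r with hvdef
    have hvd : ∀ t, HasDerivAt v (g t) t := by
      intro t
      have h1 : IntervalIntegrable g volume ε t := hgint.intervalIntegrable
      exact ((intervalIntegral.integral_hasDerivAt_right h1
        (hgcont.stronglyMeasurable.stronglyMeasurableAtFilter)
        hgcont.continuousAt).const_add c)
    have hvcont : Continuous v := by
      rw [continuous_iff_continuousAt]; exact fun t => (hvd t).continuousAt
    have hvF : ∀ t, HasDerivAt (fun s => -Real.cos (v s)) (g t * Real.sin (v t)) t := by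
      intro t
      have := ((Real.hasDerivAt_cos (v t)).comp t (hvd t)).neg
      exact this.congr_deriv (by ring)
    have hgsv_cont : Continuous (fun r => g r * Real.sin (v r)) :=
      hgcont.mul (Real.continuous_sin.comp hvcont)
    have hftc : ∫ r in ε..R, g r * Real.sin (v r)
        = (-Real.cos (v R)) - (-Real.cos (v ε)) :=
      intervalIntegral.integral_eq_sub_of_hasDerivAt (fun t _ => hvF t)
        (hgsv_cont.intervalIntegrable ε R)
    have hvε : v ε = c := by simp [hvdef]
    -- sup-norm bound on u - v over [ε, R]
    have hsup : ∀ t ∈ Icc ε R, |u t - v t| ≤ δ := by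
      intro t ht
      have h1 : IntervalIntegrable h volume ε t := by
        refine hInt.mono_set ?_
        rw [uIcc_of_le hεR, uIcc_of_le ht.1]
        exact Icc_subset_Icc le_rfl ht.2
      have h2 : IntervalIntegrable g volume ε t := hgint.intervalIntegrable
      have heq : u t - v t = ∫ r in ε..t, (h r - g r) := by
        rw [hu t ht, hvdef]
        simp only
        rw [intervalIntegral.integral_sub h1 h2]
        ring
      rw [heq]
      calc |∫ r in ε..t, (h r - g r)|
          ≤ ∫ r in Ioc ε t, |h r - g r| := by
            rw [intervalIntegral.integral_of_le ht.1]
            simpa [Real.norm_eq_abs] using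
              norm_integral_le_integral_norm (μ := volume.restrict (Ioc ε t))
                (f := fun r => h r - g r)
        _ ≤ δ := key t ht.1 ht.2
    -- integrability of the approximating integrand on Ioc
    have hgsv_int : IntegrableOn (fun r => g r * Real.sin (v r)) (Ioc ε R) :=
      (hgsv_cont.integrableOn_Icc).mono_set Ioc_subset_Icc_self
    have hBval : ∫ r in Ioc ε R, g r * Real.sin (v r) = Real.cos c - Real.cos (v R) := by
      rw [← intervalIntegral.integral_of_le hεR, hftc, hvε]; ring
    -- difference of the integrals
    have hdiff : (∫ r in Ioc ε R, h r * Real.sin (u r))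
        - (∫ r in Ioc ε R, g r * Real.sin (v r))
        = ∫ r in Ioc ε R, (h r * Real.sin (u r) - g r * Real.sin (v r)) :=
      (integral_sub hGint hgsv_int).symm
    -- bound the integrand
    have habs1 : IntegrableOn (fun r => |h r - g r|) (Ioc ε R) := by
      exact (hIoc.sub hgint.integrableOn).abs
    have habs2 : IntegrableOn (fun r => |g r| * δ) (Ioc ε R) :=
      (hgint.integrableOn.abs).mul_const δ
    have habsh : IntegrableOn (fun r => |h r|) (Ioc ε R) := hIoc.abs
    have hbound_int : IntegrableOn (fun r => |h r - g r| + |g r| * δ) (Ioc ε R) :=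
      habs1.add habs2
    have hptw : ∀ᵐ r ∂(volume.restrict (Ioc ε R)),
        ‖h r * Real.sin (u r) - g r * Real.sin (v r)‖ ≤ |h r - g r| + |g r| * δ := by
      filter_upwards [ae_restrict_mem measurableSet_Ioc] with r hr
      have hrIcc : r ∈ Icc ε R := Ioc_subset_Icc_self hr
      have h1 : |Real.sin (u r)| ≤ 1 := Real.abs_sin_le_one _
      have h2 : |Real.sin (u r) - Real.sin (v r)| ≤ δ :=
        (abs_sin_sub_sin_le _ _).trans (hsup r hrIcc)
      have heq : h r * Real.sin (u r) - g r * Real.sin (v r)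
          = (h r - g r) * Real.sin (u r) + g r * (Real.sin (u r) - Real.sin (v r)) := by ring
      rw [Real.norm_eq_abs, heq]
      calc |(h r - g r) * Real.sin (u r) + g r * (Real.sin (u r) - Real.sin (v r))|
          ≤ |(h r - g r) * Real.sin (u r)| + |g r * (Real.sin (u r) - Real.sin (v r))| :=
            abs_add_le _ _
        _ ≤ |h r - g r| + |g r| * δ := by
            rw [abs_mul, abs_mul]
            have := abs_nonneg (h r - g r)
            have := abs_nonneg (g r)
            nlinarith
    have hintbound : |∫ r in Ioc ε R, (h r * Real.sin (u r) - g r * Real.sin (v r))|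
        ≤ ∫ r in Ioc ε R, (|h r - g r| + |g r| * δ) := by
      simpa [Real.norm_eq_abs] using norm_integral_le_of_norm_le hbound_int hptw
    -- compute / bound the right-hand side
    have hIg : ∫ r in Ioc ε R, |g r| ≤ M + δ := by
      have hmono : ∫ r in Ioc ε R, |g r| ≤ ∫ r in Ioc ε R, (|h r| + |h r - g r|) := by
        refine integral_mono (hgint.integrableOn.abs) (habsh.add habs1) fun r => ?_
        have h0 : |g r| ≤ |h r| + |g r - h r| := by
          calc |g r| = |h r + (g r - h r)| := by congr 1; ring
            _ ≤ |h r| + |g r - h r| := abs_add_le _ _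
        calc |g r| ≤ |h r| + |g r - h r| := h0
          _ = |h r| + |h r - g r| := by rw [abs_sub_comm]
      have hsplit : ∫ r in Ioc ε R, (|h r| + |h r - g r|)
          = M + ∫ r in Ioc ε R, |h r - g r| :=
        integral_add habsh habs1
      have := key R hεR le_rfl
      rw [hsplit] at hmono
      linarith
    have hrhs : ∫ r in Ioc ε R, (|h r - g r| + |g r| * δ) ≤ δ + (M + δ) * δ := by
      have hsplit : ∫ r in Ioc ε R, (|h r - g r| + |g r| * δ)
          = (∫ r in Ioc ε R, |h r - g r|) + (∫ r in Ioc ε R, |g r|) * δ := by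
        rw [integral_add habs1 habs2, integral_mul_const]
      rw [hsplit]
      have h1 := key R hεR le_rfl
      nlinarith [hIg, hδ.le]
    -- endpoint error
    have hend : |Real.cos (u R) - Real.cos (v R)| ≤ δ :=
      (abs_cos_sub_cos_le _ _).trans (hsup R ⟨hεR, le_rfl⟩)
    -- put everything together
    have hXeq : X = ((∫ r in Ioc ε R, h r * Real.sin (u r))
        - (∫ r in Ioc ε R, g r * Real.sin (v r))) + (Real.cos (u R) - Real.cos (v R)) := by
      rw [hXdef, hBval, huε]; ring
    rw [hXeq]
    calc |((∫ r in Ioc ε R, h r * Real.sin (u r))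
        - (∫ r in Ioc ε R, g r * Real.sin (v r))) + (Real.cos (u R) - Real.cos (v R))|
        ≤ |(∫ r in Ioc ε R, h r * Real.sin (u r))
          - (∫ r in Ioc ε R, g r * Real.sin (v r))| + |Real.cos (u R) - Real.cos (v R)| :=
          abs_add_le _ _
      _ ≤ (δ + (M + δ) * δ) + δ := by
          rw [hdiff]
          exact add_le_add (hintbound.trans hrhs) hend
      _ ≤ δ * (3 + M) := by nlinarith
  have hXzero : X = 0 := by
    by_contra hne
    have hpos : 0 < |X| := abs_pos.2 hne
    have h3M : (0:ℝ) < 3 + M := by linarith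
    set δ := min (|X| / (2 * (3 + M))) 1 with hδdef
    have hδpos : 0 < δ := lt_min (by positivity) one_pos
    have hδ1 : δ ≤ 1 := min_le_right _ _
    have h1 := hX δ hδpos hδ1
    have h2 : δ * (3 + M) ≤ (|X| / (2 * (3 + M))) * (3 + M) :=
      mul_le_mul_of_nonneg_right (min_le_left _ _) h3M.le
    have h3 : (|X| / (2 * (3 + M))) * (3 + M) = |X| / 2 := by
      field_simp
    rw [h3] at h2
    linarith
  have := sub_eq_zero.mp hXzero
  linarith [this]

/-- Bogomolny-type decomposition of the energy, and the resulting topological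
lower bound `E(u) ≥ m |cos b − cos a|`. -/
theorem energy_topological_lower_bound
    (m : ℕ) (hm : 1 ≤ m) (u : ℝ → ℝ) (hAC : LocAC u)
    (hEfin : IntegrableOn
      (fun r => (deriv u r ^ 2 + (m:ℝ)^2 * Real.sin (u r) ^ 2 / r ^ 2) * r)
      (Set.Ioi (0:ℝ)))
    (a b : ℝ)
    (ha : Tendsto u (nhdsWithin 0 (Set.Ioi 0)) (nhds a))
    (hb : Tendsto u atTop (nhds b)) :
    corotE m u =
      (1/2) * (∫ r in Set.Ioi (0:ℝ),
          (deriv u r + ((m:ℝ)/r) * Real.sin (u r)) ^ 2 * r)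
        + m * (Real.cos b - Real.cos a) ∧
    (m:ℝ) * |Real.cos b - Real.cos a| ≤ corotE m u := by
  have hm1 : (1:ℝ) ≤ (m:ℝ) := by exact_mod_cast hm
  -- continuity of u on (0, ∞)
  have hucont : ContinuousOn u (Ioi 0) := by
    intro r hr
    have hr0 : (0:ℝ) < r := hr
    have h1 : (0:ℝ) < r/2 := by linarith
    have h2 : r/2 ≤ r + 1 := by linarith
    have hInt := (hAC (r/2) (r+1) h1 h2).1
    have hpc : ContinuousOn (fun t => u (r/2) + ∫ s in (r/2)..t, deriv u s)
        (Icc (r/2) (r+1)) := by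
      have := intervalIntegral.continuousOn_primitive_interval' (μ := volume)
        (f := deriv u) (b₁ := r/2) (b₂ := r+1) (a := r/2) hInt left_mem_uIcc
      rw [uIcc_of_le h2] at this
      exact continuousOn_const.add this
    have hEq : EqOn u (fun t => u (r/2) + ∫ s in (r/2)..t, deriv u s) (Icc (r/2) (r+1)) := by
      intro t ht
      have := (hAC (r/2) t h1 ht.1).2
      simp only
      linarith
    have hc2 : ContinuousOn u (Icc (r/2) (r+1)) := hpc.congr hEq
    have hmem : Icc (r/2) (r+1) ∈ nhdsWithin r (Ioi 0) :=
      mem_nhdsWithin_of_mem_nhds (Icc_mem_nhds (by linarith) (by linarith))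
    exact (hc2 r ⟨by linarith, by linarith⟩).mono_of_mem_nhdsWithin hmem
  -- integrability of the cross term
  have hGsm : AEStronglyMeasurable (fun r => deriv u r * Real.sin (u r))
      (volume.restrict (Ioi 0)) :=
    ((measurable_deriv u).aestronglyMeasurable).mul
      ((Real.continuous_sin.comp_continuousOn hucont).aestronglyMeasurable measurableSet_Ioi)
  have hGint : IntegrableOn (fun r => deriv u r * Real.sin (u r)) (Ioi 0) := by
    refine Integrable.mono' (hEfin.const_mul (1/2)) hGsm ?_
    filter_upwards [ae_restrict_mem measurableSet_Ioi] with r hr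
    have hr0 : (0:ℝ) < r := hr
    have hm2 : (1:ℝ) ≤ (m:ℝ)^2 := by nlinarith
    set A := deriv u r with hA
    set q := Real.sin (u r) with hq
    have key : 2 * |A * q| * r ≤ A^2*r^2 + (m:ℝ)^2*q^2 := by
      have habs : |A * q| = |A| * |q| := abs_mul _ _
      nlinarith [sq_nonneg (|A| * r - |q|), sq_abs A, sq_abs q, abs_nonneg A, abs_nonneg q,
        sq_nonneg q, hr0]
    have hform : (1/2) * ((A^2 + (m:ℝ)^2*q^2/r^2)*r) = (A^2*r^2 + (m:ℝ)^2*q^2)/(2*r) := by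
      field_simp
    rw [Real.norm_eq_abs, hform, le_div_iff₀ (by positivity : (0:ℝ) < 2*r)]
    linarith [key]
  -- FTC on subintervals
  have Hcos : ∀ ε R : ℝ, 0 < ε → ε ≤ R →
      ∫ r in Ioc ε R, deriv u r * Real.sin (u r) = Real.cos (u ε) - Real.cos (u R) := by
    intro ε R hε hεR
    refine ftc_sin (c := u ε) hεR (hAC ε R hε hεR).1 ?_
    intro t ht
    have := (hAC ε t hε ht.1).2
    linarith
  -- exhaust (0,∞) by the sets Ioc (1/(n+1)) (n+1)
  set Sn : ℕ → Set ℝ := fun n => Ioc (1/((n:ℝ)+1)) ((n:ℝ)+1) with hSndef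
  have hsm : ∀ n, MeasurableSet (Sn n) := fun n => measurableSet_Ioc
  have hsmono : Monotone Sn := by
    intro i j hij
    have hij' : (i:ℝ) ≤ j := by exact_mod_cast hij
    apply Ioc_subset_Ioc
    · apply one_div_le_one_div_of_le
      · positivity
      · linarith
    · linarith
  have hsunion : ⋃ n, Sn n = Ioi (0:ℝ) := by
    ext x
    simp only [hSndef, mem_iUnion, mem_Ioc, mem_Ioi]
    constructor
    · rintro ⟨n, h1, -⟩
      have : (0:ℝ) < 1/((n:ℝ)+1) := by positivity
      linarith
    · intro hx
      obtain ⟨n, hn⟩ := exists_nat_ge (max (1/x) x)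
      have hn1 : 1/x ≤ (n:ℝ) := le_trans (le_max_left _ _) hn
      have hn2 : x ≤ (n:ℝ) := le_trans (le_max_right _ _) hn
      refine ⟨n, ?_, by linarith⟩
      rw [div_lt_iff₀ (by positivity)]
      have hxx : (1/x) * x = 1 := by field_simp
      nlinarith
  have htend1 : Tendsto (fun n => ∫ r in Sn n, deriv u r * Real.sin (u r)) atTop
      (𝓝 (∫ r in Ioi (0:ℝ), deriv u r * Real.sin (u r))) := by
    have := tendsto_setIntegral_of_monotone hsm hsmono (hsunion ▸ hGint)
    rwa [hsunion] at this
  have hval : ∀ n : ℕ, ∫ r in Sn n, deriv u r * Real.sin (u r)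
      = Real.cos (u (1/((n:ℝ)+1))) - Real.cos (u ((n:ℝ)+1)) := by
    intro n
    refine Hcos _ _ (by positivity) ?_
    have h1 : (1:ℝ)/((n:ℝ)+1) ≤ 1 := by
      rw [div_le_one (by positivity)]
      linarith [Nat.cast_nonneg (α := ℝ) n]
    linarith [Nat.cast_nonneg (α := ℝ) n]
  have hseq0 : Tendsto (fun n : ℕ => 1/((n:ℝ)+1)) atTop (nhdsWithin 0 (Ioi 0)) := by
    rw [tendsto_nhdsWithin_iff]
    exact ⟨tendsto_one_div_add_atTop_nhds_zero_nat,
      Eventually.of_forall fun n => mem_Ioi.mpr (by positivity)⟩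
  have hseqb : Tendsto (fun n : ℕ => (n:ℝ)+1) atTop atTop :=
    tendsto_atTop_add_const_right _ 1 tendsto_natCast_atTop_atTop
  have htend2 : Tendsto (fun n : ℕ => Real.cos (u (1/((n:ℝ)+1))) - Real.cos (u ((n:ℝ)+1)))
      atTop (𝓝 (Real.cos a - Real.cos b)) := by
    have := ((Real.continuous_cos.tendsto a).comp (ha.comp hseq0)).sub
      ((Real.continuous_cos.tendsto b).comp (hb.comp hseqb))
    simpa [Function.comp] using this
  have hS : ∫ r in Ioi (0:ℝ), deriv u r * Real.sin (u r) = Real.cos a - Real.cos b := by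
    refine tendsto_nhds_unique ?_ htend2
    simpa only [hval] using htend1
  -- Bogomolny decompositions
  have hPeq : EqOn (fun r => (deriv u r + ((m:ℝ)/r) * Real.sin (u r)) ^ 2 * r)
      (fun r => (deriv u r ^ 2 + (m:ℝ)^2 * Real.sin (u r) ^ 2 / r ^ 2) * r
        + (2*(m:ℝ)) * (deriv u r * Real.sin (u r))) (Ioi 0) := by
    intro r hr
    have hr0 : r ≠ 0 := ne_of_gt hr
    simp only
    field_simp
    ring
  have hQeq : EqOn (fun r => (deriv u r - ((m:ℝ)/r) * Real.sin (u r)) ^ 2 * r)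
      (fun r => (deriv u r ^ 2 + (m:ℝ)^2 * Real.sin (u r) ^ 2 / r ^ 2) * r
        - (2*(m:ℝ)) * (deriv u r * Real.sin (u r))) (Ioi 0) := by
    intro r hr
    have hr0 : r ≠ 0 := ne_of_gt hr
    simp only
    field_simp
    ring
  have hP : ∫ r in Ioi (0:ℝ), (deriv u r + ((m:ℝ)/r) * Real.sin (u r)) ^ 2 * r
      = (∫ r in Ioi (0:ℝ), (deriv u r ^ 2 + (m:ℝ)^2 * Real.sin (u r) ^ 2 / r ^ 2) * r)
        + (2*(m:ℝ)) * (Real.cos a - Real.cos b) := by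
    rw [setIntegral_congr_fun measurableSet_Ioi hPeq,
      integral_add hEfin (hGint.const_mul (2*(m:ℝ))), integral_const_mul, hS]
  have hQ : ∫ r in Ioi (0:ℝ), (deriv u r - ((m:ℝ)/r) * Real.sin (u r)) ^ 2 * r
      = (∫ r in Ioi (0:ℝ), (deriv u r ^ 2 + (m:ℝ)^2 * Real.sin (u r) ^ 2 / r ^ 2) * r)
        - (2*(m:ℝ)) * (Real.cos a - Real.cos b) := by
    rw [setIntegral_congr_fun measurableSet_Ioi hQeq,
      integral_sub hEfin (hGint.const_mul (2*(m:ℝ))), integral_const_mul, hS]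
  have hPnn : 0 ≤ ∫ r in Ioi (0:ℝ), (deriv u r + ((m:ℝ)/r) * Real.sin (u r)) ^ 2 * r :=
    setIntegral_nonneg measurableSet_Ioi fun r hr => mul_nonneg (sq_nonneg _) (le_of_lt hr)
  have hQnn : 0 ≤ ∫ r in Ioi (0:ℝ), (deriv u r - ((m:ℝ)/r) * Real.sin (u r)) ^ 2 * r :=
    setIntegral_nonneg measurableSet_Ioi fun r hr => mul_nonneg (sq_nonneg _) (le_of_lt hr)
  have hEeq : corotE m u =
      (1/2) * (∫ r in Ioi (0:ℝ), (deriv u r + ((m:ℝ)/r) * Real.sin (u r)) ^ 2 * r)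
        + m * (Real.cos b - Real.cos a) := by
    unfold corotE
    linarith [hP]
  have hEeq2 : corotE m u =
      (1/2) * (∫ r in Ioi (0:ℝ), (deriv u r - ((m:ℝ)/r) * Real.sin (u r)) ^ 2 * r)
        + m * (Real.cos a - Real.cos b) := by
    unfold corotE
    linarith [hQ]
  refine ⟨hEeq, ?_⟩
  have hE1 : (m:ℝ) * (Real.cos b - Real.cos a) ≤ corotE m u := by
    rw [hEeq]; linarith [hPnn]
  have hE2 : (m:ℝ) * (Real.cos a - Real.cos b) ≤ corotE m u := by
    rw [hEeq2]; linarith [hQnn]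
  rcases abs_choice (Real.cos b - Real.cos a) with hab | hab <;> rw [hab]
  · exact hE1
  · have : (m:ℝ) * -(Real.cos b - Real.cos a) = (m:ℝ) * (Real.cos a - Real.cos b) := by ring
    rw [this]
    exact hE2
end

section
/- Let m ≥ 1 be an integer and δ₁ > 0. There exists C = C(δ₁, m) > 0 such that every locally absolutely continuous u : (0,∞) → ℝ with lim_{r→0+} u(r) = 0, lim_{r→∞} u(r) = 0 and E(u) ≤ 4m − δ₁ satisfies (1/C) ‖u‖²_{X²} ≤ E(u) ≤ C ‖u‖²_{X²}. -/
open MeasureTheory Filter Set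

/-- The squared `X²` norm `‖u‖²_{X²} = ∫₀^∞ (u'² + m² u²/r²) r dr`. -/
noncomputable def X2sq (m : ℕ) (u : ℝ → ℝ) : ℝ :=
  ∫ r in Set.Ioi (0:ℝ), (deriv u r ^ 2 + (m:ℝ)^2 * (u r) ^ 2 / r ^ 2) * r



lemma cos_taylor (p q : ℝ) : |Real.cos q - Real.cos p + Real.sin p * (q - p)| ≤ (q - p)^2 := by
  have h := Convex.norm_image_sub_le_of_norm_hasDerivWithin_le
    (f := fun x => Real.cos x + Real.sin p * x) (f' := fun x => -Real.sin x + Real.sin p)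
    (C := |q - p|) (s := uIcc p q) (x := p) (y := q)
    (fun x hx => ((Real.hasDerivAt_cos x).add ((hasDerivAt_id x).const_mul (Real.sin p))).hasDerivWithinAt.congr_deriv (by ring))
    (fun x hx => by
      have h1 : |Real.sin p - Real.sin x| ≤ |p - x| := by
        rw [Real.sin_sub_sin]
        have b1 : |Real.sin ((p - x) / 2)| ≤ |(p - x) / 2| := Real.abs_sin_le_abs
        have b2 : |Real.cos ((p + x) / 2)| ≤ 1 := Real.abs_cos_le_one _
        calc |2 * Real.sin ((p - x) / 2) * Real.cos ((p + x) / 2)|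
            = 2 * |Real.sin ((p - x) / 2)| * |Real.cos ((p + x) / 2)| := by
              rw [abs_mul, abs_mul]; norm_num
          _ ≤ 2 * |(p - x) / 2| * 1 := by
              apply mul_le_mul _ b2 (abs_nonneg _) (by positivity)
              exact mul_le_mul_of_nonneg_left b1 (by norm_num)
          _ = |p - x| := by rw [abs_div]; rw [abs_two]; ring
      have h2 : |p - x| ≤ |q - p| := by
        rcases hx with ⟨h3, h4⟩
        rcases le_total p q with hpq | hpq
        · simp only [min_eq_left, max_eq_right, hpq] at h3 h4
          rw [abs_of_nonneg (by linarith : (0:ℝ) ≤ q - p), abs_sub_le_iff]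
          constructor <;> linarith
        · simp only [min_eq_right, max_eq_left, hpq] at h3 h4
          rw [show |q - p| = p - q by rw [abs_sub_comm]; exact abs_of_nonneg (by linarith), abs_sub_le_iff]
          constructor <;> linarith
      calc ‖-Real.sin x + Real.sin p‖ = |Real.sin p - Real.sin x| := by
            rw [Real.norm_eq_abs]; ring_nf
        _ ≤ |q - p| := h1.trans h2)
    (convex_uIcc p q) left_mem_uIcc right_mem_uIcc
  have e : (Real.cos q + Real.sin p * q) - (Real.cos p + Real.sin p * p)
      = Real.cos q - Real.cos p + Real.sin p * (q - p) := by ring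
  rw [Real.norm_eq_abs, Real.norm_eq_abs, e] at h
  calc |Real.cos q - Real.cos p + Real.sin p * (q - p)| ≤ |q - p| * |q - p| := h
    _ = (q - p)^2 := by rw [← abs_mul, ← sq, abs_sq]

lemma sin_lower (M x : ℝ) (hM0 : 0 < M) (hMpi : M ≤ Real.pi)
    (hx0 : 0 ≤ x) (hxM : x ≤ M) : (Real.sin M / M) * x ≤ Real.sin x := by
  have hconc : ConcaveOn ℝ (Icc 0 Real.pi) Real.sin := strictConcaveOn_sin_Icc.concaveOn
  have ha : (0:ℝ) ≤ 1 - x / M := by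
    have : x / M ≤ 1 := (div_le_one hM0).2 hxM
    linarith
  have h := hconc.2 (show (0:ℝ) ∈ Icc (0:ℝ) Real.pi from ⟨le_refl 0, Real.pi_pos.le⟩)
    (show M ∈ Icc (0:ℝ) Real.pi from ⟨hM0.le, hMpi⟩)
    ha (show (0:ℝ) ≤ x / M by positivity)
    (show (1 - x / M) + x / M = 1 by ring)
  have e : (1 - x / M) • (0:ℝ) + (x / M) • M = x := by
    rw [smul_eq_mul, smul_eq_mul, mul_zero, zero_add]
    field_simp
  rw [e] at h
  have : (1 - x / M) • Real.sin 0 + (x / M) • Real.sin M = Real.sin M / M * x := by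
    simp [Real.sin_zero, smul_eq_mul]; ring
  rw [this] at h
  exact h

lemma sin_sq_lower (M x : ℝ) (hM0 : 0 < M) (hMpi : M ≤ Real.pi) (hx : |x| ≤ M) :
    (Real.sin M / M)^2 * x^2 ≤ Real.sin x ^ 2 := by
  have key : ∀ y : ℝ, 0 ≤ y → y ≤ M → (Real.sin M / M)^2 * y^2 ≤ Real.sin y ^ 2 := by
    intro y hy0 hyM
    have h1 := sin_lower M y hM0 hMpi hy0 hyM
    have h2 : 0 ≤ Real.sin M / M * y := by
      have := Real.sin_nonneg_of_nonneg_of_le_pi hM0.le hMpi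
      positivity
    calc (Real.sin M / M)^2 * y^2 = (Real.sin M / M * y)^2 := by ring
      _ ≤ Real.sin y ^ 2 := by
          apply pow_le_pow_left₀ h2 h1
  rcases le_total 0 x with hx0 | hx0
  · exact key x hx0 (by rwa [abs_of_nonneg hx0] at hx)
  · have := key (-x) (by linarith) (by rwa [abs_of_nonpos hx0] at hx)
    simpa using this

lemma sin_lip (p q : ℝ) : |Real.sin p - Real.sin q| ≤ |p - q| := by
  rw [Real.sin_sub_sin]
  have b1 : |Real.sin ((p - q) / 2)| ≤ |(p - q) / 2| := Real.abs_sin_le_abs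
  have b2 : |Real.cos ((p + q) / 2)| ≤ 1 := Real.abs_cos_le_one _
  calc |2 * Real.sin ((p - q) / 2) * Real.cos ((p + q) / 2)|
      = 2 * |Real.sin ((p - q) / 2)| * |Real.cos ((p + q) / 2)| := by
        rw [abs_mul, abs_mul]; norm_num
    _ ≤ 2 * |(p - q) / 2| * 1 := by
        apply mul_le_mul _ b2 (abs_nonneg _) (by positivity)
        exact mul_le_mul_of_nonneg_left b1 (by norm_num)
    _ = |p - q| := by rw [abs_div, abs_two]; ring

lemma key_ineq_s5 (u : ℝ → ℝ) (a b : ℝ) (hab : a ≤ b)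
    (hg : IntervalIntegrable (deriv u) volume a b)
    (hu : ∀ x ∈ Icc a b, u x - u a = ∫ t in a..x, deriv u t)
    (hcont : ContinuousOn u (Icc a b)) :
    |Real.cos (u b) - Real.cos (u a)| ≤
      ∫ t in a..b, |Real.sin (u t)| * |deriv u t| := by
  set g := deriv u with hgdef
  set s : ℝ → ℝ := fun t => |Real.sin (u t)| * |g t| with hsdef
  have huIcc : uIcc a b = Icc a b := uIcc_of_le hab
  have hs_int : IntervalIntegrable s volume a b := by
    apply hg.abs.continuousOn_mul
    rw [huIcc]
    exact continuous_abs.comp_continuousOn (Real.continuous_sin.comp_continuousOn hcont)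
  -- reduce to an ε-approximate bound
  apply le_of_forall_pos_le_add
  intro ε hε
  set K := ∫ t in a..b, |g t| with hKdef
  have hK : 0 ≤ K := intervalIntegral.integral_nonneg hab (fun t _ => abs_nonneg _)
  set ε₀ := ε / (2 * (K + 1)) with hε₀def
  have hε₀ : 0 < ε₀ := by positivity
  -- uniform continuity
  have hunif : UniformContinuousOn u (Icc a b) :=
    isCompact_Icc.uniformContinuousOn_of_continuous hcont
  obtain ⟨δ, hδ, hδ'⟩ := (Metric.uniformContinuousOn_iff).1 hunif ε₀ hε₀
  -- choose partition
  obtain ⟨n, hn⟩ := exists_nat_gt ((b - a) / δ)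
  have hn0 : 0 < (n:ℝ) := lt_of_le_of_lt (div_nonneg (by linarith) hδ.le) hn
  have hnne : (n:ℝ) ≠ 0 := ne_of_gt hn0
  set h := (b - a) / n with hhdef
  have hh0 : 0 ≤ h := div_nonneg (by linarith) hn0.le
  have hhδ : h < δ := by
    rw [hhdef, div_lt_iff₀ hn0]
    calc b - a = (b - a) / δ * δ := by field_simp
      _ < δ * n := by
          rw [mul_comm δ (n:ℝ), mul_comm ((b-a)/δ) δ, mul_comm δ ((b-a)/δ)]
          exact mul_lt_mul_of_pos_right hn hδ
  set x : ℕ → ℝ := fun i => a + i * h with hxdef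
  have hx0 : x 0 = a := by simp [hxdef]
  have hxn : x n = b := by
    simp only [hxdef, hhdef]
    field_simp
    ring
  have hxadj : ∀ i : ℕ, x (i + 1) - x i = h := by
    intro i; simp only [hxdef]; push_cast; ring
  have hxmono : ∀ i : ℕ, x i ≤ x (i + 1) := by
    intro i; have := hxadj i; linarith
  have hmem : ∀ i : ℕ, i ≤ n → x i ∈ Icc a b := by
    intro i hi
    constructor
    · simp only [hxdef]
      have : 0 ≤ (i:ℝ) * h := mul_nonneg (Nat.cast_nonneg i) hh0
      linarith
    · rw [← hxn]; simp only [hxdef, add_le_add_iff_left]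
      apply mul_le_mul_of_nonneg_right _ hh0
      exact_mod_cast hi
  have hsubI : ∀ i : ℕ, i < n → uIcc (x i) (x (i + 1)) ⊆ uIcc a b := by
    intro i hi
    apply uIcc_subset_uIcc <;> rw [huIcc]
    · exact hmem i hi.le
    · exact hmem (i + 1) hi
  have hg_i : ∀ i : ℕ, i < n → IntervalIntegrable g volume (x i) (x (i + 1)) :=
    fun i hi => hg.mono_set (hsubI i hi)
  have hs_i : ∀ i : ℕ, i < n → IntervalIntegrable s volume (x i) (x (i + 1)) :=
    fun i hi => hs_int.mono_set (hsubI i hi)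
  -- the per-interval estimate
  have hterm : ∀ i : ℕ, i < n →
      |Real.cos (u (x (i + 1))) - Real.cos (u (x i))| ≤
        (∫ t in x i..x (i + 1), s t) + 2 * ε₀ * ∫ t in x i..x (i + 1), |g t| := by
    intro i hi
    set p := u (x i) with hp
    set q := u (x (i + 1)) with hq
    have hmi : x i ∈ Icc a b := hmem i hi.le
    have hmi1 : x (i + 1) ∈ Icc a b := hmem (i + 1) hi
    have hΔeq : q - p = ∫ t in x i..x (i + 1), g t := by
      have e1 := hu (x i) hmi
      have e2 := hu (x (i + 1)) hmi1
      have e3 : (∫ t in a..x (i + 1), g t) - ∫ t in a..x i, g t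
          = ∫ t in x i..x (i + 1), g t :=
        intervalIntegral.integral_interval_sub_left
          (hg.mono_set (uIcc_subset_uIcc (by rw [huIcc]; exact left_mem_Icc.2 hab) (by rw [huIcc]; exact hmi1)))
          (hg.mono_set (uIcc_subset_uIcc (by rw [huIcc]; exact left_mem_Icc.2 hab) (by rw [huIcc]; exact hmi)))
      rw [hp, hq, ← e3, ← e1, ← e2]; ring
    have hΔ1 : |q - p| ≤ ∫ t in x i..x (i + 1), |g t| := by
      rw [hΔeq]
      exact intervalIntegral.abs_integral_le_integral_abs (hxmono i)
    have hΔ2 : |q - p| ≤ ε₀ := by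
      have hd : dist (x (i + 1)) (x i) < δ := by
        rw [Real.dist_eq, hxadj i, abs_of_nonneg hh0]; exact hhδ
      have := hδ' (x (i + 1)) hmi1 (x i) hmi hd
      rw [Real.dist_eq] at this
      exact this.le
    -- Taylor bound
    have htay : |Real.cos q - Real.cos p| ≤ |Real.sin p| * |q - p| + (q - p)^2 := by
      have h1 : |Real.cos q - Real.cos p + Real.sin p * (q - p)| ≤ (q - p)^2 := cos_taylor p q
      calc |Real.cos q - Real.cos p|
          = |(Real.cos q - Real.cos p + Real.sin p * (q - p)) - Real.sin p * (q - p)| := by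
            ring_nf
        _ ≤ |Real.cos q - Real.cos p + Real.sin p * (q - p)| + |Real.sin p * (q - p)| :=
            abs_sub _ _
        _ ≤ (q - p)^2 + |Real.sin p| * |q - p| := by
            rw [abs_mul]; linarith
        _ = |Real.sin p| * |q - p| + (q - p)^2 := by ring
    -- bound |sin p| * |q-p| by an integral
    have hbd1 : |Real.sin p| * |q - p| ≤ ∫ t in x i..x (i + 1), (s t + ε₀ * |g t|) := by
      calc |Real.sin p| * |q - p| ≤ |Real.sin p| * ∫ t in x i..x (i + 1), |g t| :=
            mul_le_mul_of_nonneg_left hΔ1 (abs_nonneg _)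
        _ = ∫ t in x i..x (i + 1), |Real.sin p| * |g t| := by
            rw [← intervalIntegral.integral_const_mul]
        _ ≤ ∫ t in x i..x (i + 1), (s t + ε₀ * |g t|) := by
            apply intervalIntegral.integral_mono_on (hxmono i)
            · exact (hg_i i hi).abs.const_mul _
            · exact (hs_i i hi).add (((hg_i i hi).abs).const_mul _)
            · intro t ht
              have htab : t ∈ Icc a b := ⟨hmi.1.trans ht.1, ht.2.trans hmi1.2⟩
              have hdist : |p - u t| ≤ ε₀ := by
                have hd : dist (x i) t < δ := by
                  rw [Real.dist_eq]
                  have h1 : x i ≤ t := ht.1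
                  have h2 : t ≤ x (i + 1) := ht.2
                  have h3 := hxadj i
                  rw [abs_of_nonpos (by linarith)]
                  linarith
                have := hδ' (x i) hmi t htab hd
                rw [Real.dist_eq] at this
                exact this.le
              have hsin : |Real.sin p| ≤ |Real.sin (u t)| + ε₀ := by
                have h1 : |Real.sin p| - |Real.sin (u t)| ≤ |Real.sin p - Real.sin (u t)| :=
                  abs_sub_abs_le_abs_sub _ _
                have h2 : |Real.sin p - Real.sin (u t)| ≤ |p - u t| := sin_lip _ _
                linarith
              have hgnn : (0:ℝ) ≤ |g t| := abs_nonneg _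
              have : |Real.sin p| * |g t| ≤ (|Real.sin (u t)| + ε₀) * |g t| :=
                mul_le_mul_of_nonneg_right hsin hgnn
              calc |Real.sin p| * |g t| ≤ (|Real.sin (u t)| + ε₀) * |g t| := this
                _ = s t + ε₀ * |g t| := by rw [hsdef]; ring
    have hbd2 : (q - p)^2 ≤ ε₀ * ∫ t in x i..x (i + 1), |g t| := by
      calc (q - p)^2 = |q - p| * |q - p| := by rw [← abs_mul, ← sq, abs_sq]
        _ ≤ ε₀ * ∫ t in x i..x (i + 1), |g t| :=
            mul_le_mul hΔ2 hΔ1 (abs_nonneg _) hε₀.le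
    have hsplit : (∫ t in x i..x (i + 1), (s t + ε₀ * |g t|)) =
        (∫ t in x i..x (i + 1), s t) + ε₀ * ∫ t in x i..x (i + 1), |g t| := by
      rw [intervalIntegral.integral_add (hs_i i hi) (((hg_i i hi).abs).const_mul _),
        intervalIntegral.integral_const_mul]
    calc |Real.cos q - Real.cos p| ≤ |Real.sin p| * |q - p| + (q - p)^2 := htay
      _ ≤ ((∫ t in x i..x (i + 1), s t) + ε₀ * ∫ t in x i..x (i + 1), |g t|)
          + ε₀ * ∫ t in x i..x (i + 1), |g t| := by
          rw [← hsplit]; exact add_le_add hbd1 hbd2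
      _ = (∫ t in x i..x (i + 1), s t) + 2 * ε₀ * ∫ t in x i..x (i + 1), |g t| := by ring
  -- sum up
  have htel : Real.cos (u b) - Real.cos (u a)
      = ∑ i ∈ Finset.range n, (Real.cos (u (x (i + 1))) - Real.cos (u (x i))) := by
    rw [Finset.sum_range_sub (f := fun i => Real.cos (u (x i)))]
    rw [hx0, hxn]
  have hsum_s : ∑ i ∈ Finset.range n, (∫ t in x i..x (i + 1), s t) = ∫ t in a..b, s t := by
    rw [← hx0, ← hxn]
    exact intervalIntegral.sum_integral_adjacent_intervals (fun k hk => hs_i k hk)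
  have hsum_g : ∑ i ∈ Finset.range n, (∫ t in x i..x (i + 1), |g t|) = K := by
    rw [hKdef, ← hx0, ← hxn]
    exact intervalIntegral.sum_integral_adjacent_intervals (fun k hk => (hg_i k hk).abs)
  calc |Real.cos (u b) - Real.cos (u a)|
      = |∑ i ∈ Finset.range n, (Real.cos (u (x (i + 1))) - Real.cos (u (x i)))| := by
        rw [← htel]
    _ ≤ ∑ i ∈ Finset.range n, |Real.cos (u (x (i + 1))) - Real.cos (u (x i))| :=
        Finset.abs_sum_le_sum_abs _ _
    _ ≤ ∑ i ∈ Finset.range n, ((∫ t in x i..x (i + 1), s t)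
        + 2 * ε₀ * ∫ t in x i..x (i + 1), |g t|) :=
        Finset.sum_le_sum (fun i hi => hterm i (Finset.mem_range.1 hi))
    _ = (∫ t in a..b, s t) + 2 * ε₀ * K := by
        rw [Finset.sum_add_distrib, hsum_s, ← Finset.mul_sum, hsum_g]
    _ ≤ (∫ t in a..b, s t) + ε := by
        have hD : ε₀ * (2 * (K + 1)) = ε := by
          rw [hε₀def]; field_simp
        nlinarith [hε₀.le, hK]
lemma amgm (m : ℝ) (hm : 1 ≤ m) (d v r : ℝ) (hr : 0 < r) :
    |Real.sin v| * |d| ≤ (1 / (2 * m)) * ((d ^ 2 + m ^ 2 * Real.sin v ^ 2 / r ^ 2) * r) := by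
  have key : 2 * m * (|Real.sin v| * |d|) * r ≤ ((d ^ 2 + m ^ 2 * Real.sin v ^ 2 / r ^ 2) * r) * r := by
    have h1 : ((d ^ 2 + m ^ 2 * Real.sin v ^ 2 / r ^ 2) * r) * r
        = d ^ 2 * r ^ 2 + m ^ 2 * Real.sin v ^ 2 := by
      field_simp
    rw [h1]
    nlinarith [sq_nonneg (|d| * r - m * |Real.sin v|), sq_abs d, sq_abs (Real.sin v),
      abs_nonneg d, abs_nonneg (Real.sin v), sq_abs (d * r)]
  have key2 : 2 * m * (|Real.sin v| * |d|) ≤ (d ^ 2 + m ^ 2 * Real.sin v ^ 2 / r ^ 2) * r :=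
    le_of_mul_le_mul_right (by linarith [key]) hr
  rw [div_mul_eq_mul_div, one_mul, le_div_iff₀ (by linarith : (0:ℝ) < 2 * m)]
  linarith

/-- Below the threshold `2E(Q) = 4m`, the energy is comparable to the squared `X²` norm. -/
theorem energy_X2_comparable_below_threshold
    (m : ℕ) (hm : 1 ≤ m) (δ₁ : ℝ) (hδ₁ : 0 < δ₁) :
    ∃ C : ℝ, 0 < C ∧
      ∀ u : ℝ → ℝ, LocAC u →
        Tendsto u (nhdsWithin 0 (Set.Ioi 0)) (nhds 0) →
        Tendsto u atTop (nhds 0) →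
        IntegrableOn
          (fun r => (deriv u r ^ 2 + (m:ℝ)^2 * Real.sin (u r) ^ 2 / r ^ 2) * r)
          (Set.Ioi (0:ℝ)) →
        corotE m u ≤ 4 * m - δ₁ →
        (1/C) * X2sq m u ≤ corotE m u ∧ corotE m u ≤ C * X2sq m u := by
  have hmR : (1:ℝ) ≤ (m:ℝ) := by exact_mod_cast hm
  set ε : ℝ := min (δ₁ / (2 * m)) 1 with hεdef
  have hε0 : 0 < ε := lt_min (by positivity) one_pos
  have hε1 : ε ≤ 1 := min_le_right _ _
  set M : ℝ := Real.arccos (ε - 1) with hMdef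
  have hM0 : 0 < M := Real.arccos_pos.2 (by linarith)
  have hMpi : M < Real.pi := lt_of_le_of_ne (Real.arccos_le_pi _) (fun h => by
    have := Real.arccos_eq_pi.1 h; linarith)
  have hcosM : Real.cos M = ε - 1 := Real.cos_arccos (by linarith) (by linarith)
  have hsinM : 0 < Real.sin M := Real.sin_pos_of_pos_of_lt_pi hM0 hMpi
  set c : ℝ := (Real.sin M / M) ^ 2 with hcdef
  have hc0 : 0 < c := by positivity
  have hc1 : c ≤ 1 := by
    have h1 : Real.sin M ≤ M := (Real.sin_lt hM0).le
    rw [hcdef, div_pow]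
    apply div_le_one_of_le₀ (pow_le_pow_left₀ hsinM.le h1 2) (by positivity)
  refine ⟨2 / c, by positivity, ?_⟩
  intro u hAC hu0 huinf h_int hE
  set g : ℝ → ℝ := deriv u with hgdef
  set Eint : ℝ → ℝ := fun r => (g r ^ 2 + (m:ℝ) ^ 2 * Real.sin (u r) ^ 2 / r ^ 2) * r with hEintdef
  set X2int : ℝ → ℝ := fun r => (g r ^ 2 + (m:ℝ) ^ 2 * (u r) ^ 2 / r ^ 2) * r with hX2intdef
  have hEint_nonneg : ∀ r ∈ Ioi (0:ℝ), 0 ≤ Eint r := by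
    intro r hr
    have hr0 : (0:ℝ) < r := hr
    have : 0 ≤ g r ^ 2 + (m:ℝ) ^ 2 * Real.sin (u r) ^ 2 / r ^ 2 := by positivity
    exact mul_nonneg this hr0.le
  have hX2int_nonneg : ∀ r ∈ Ioi (0:ℝ), 0 ≤ X2int r := by
    intro r hr
    have hr0 : (0:ℝ) < r := hr
    have : 0 ≤ g r ^ 2 + (m:ℝ) ^ 2 * (u r) ^ 2 / r ^ 2 := by positivity
    exact mul_nonneg this hr0.le
  have hcorot_eq : corotE m u = (1/2) * ∫ r in Ioi (0:ℝ), Eint r := rfl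
  have hX2_eq : X2sq m u = ∫ r in Ioi (0:ℝ), X2int r := rfl
  have hIE_nonneg : 0 ≤ ∫ r in Ioi (0:ℝ), Eint r :=
    setIntegral_nonneg measurableSet_Ioi hEint_nonneg
  -- continuity of u on compact subintervals
  have hcont : ∀ a b : ℝ, 0 < a → a ≤ b → ContinuousOn u (Icc a b) := by
    intro a b ha hab
    have hint : IntervalIntegrable g volume a b := (hAC a b ha hab).1
    have hprim : ContinuousOn (fun x => ∫ t in a..x, g t) (Icc a b) := by
      have := intervalIntegral.continuousOn_primitive_interval
        (a := a) (b := b) (f := g) (μ := volume) ?_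
      · rwa [uIcc_of_le hab] at this
      · rw [uIcc_of_le hab, integrableOn_Icc_iff_integrableOn_Ioc]
        exact (intervalIntegrable_iff_integrableOn_Ioc_of_le hab).1 hint
    apply (continuousOn_const.add hprim).congr
    intro x hx
    have := (hAC a x ha hx.1).2
    show u x = u a + ∫ t in a..x, g t
    linarith
  have huC : ContinuousOn u (Ioi 0) := by
    intro x hx
    have hx0 : (0:ℝ) < x := hx
    have h1 : ContinuousWithinAt u (Icc (x/2) (x+1)) x :=
      (hcont (x/2) (x+1) (by linarith) (by linarith)).continuousWithinAt
        ⟨by linarith, by linarith⟩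
    exact h1.mono_of_mem_nhdsWithin (mem_nhdsWithin_of_mem_nhds (Icc_mem_nhds (by linarith) (by linarith)))
  have huM : AEMeasurable u (volume.restrict (Ioi (0:ℝ))) :=
    huC.aemeasurable measurableSet_Ioi
  have hgM : Measurable g := measurable_deriv u
  -- integrability of |sin u| * |g|
  set s : ℝ → ℝ := fun r => |Real.sin (u r)| * |g r| with hsdef
  have hs_nonneg : ∀ r, 0 ≤ s r := fun r => mul_nonneg (abs_nonneg _) (abs_nonneg _)
  have hs_meas : AEStronglyMeasurable s (volume.restrict (Ioi (0:ℝ))) := by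
    apply AEMeasurable.aestronglyMeasurable
    exact ((continuous_abs.measurable.comp_aemeasurable
        (Real.continuous_sin.measurable.comp_aemeasurable huM)).mul
      (continuous_abs.measurable.comp_aemeasurable hgM.aemeasurable.restrict))
  have hs_bound : ∀ r ∈ Ioi (0:ℝ), s r ≤ (1 / (2 * (m:ℝ))) * Eint r := fun r hr =>
    amgm (m:ℝ) hmR (g r) (u r) r hr
  have hs_int : IntegrableOn s (Ioi (0:ℝ)) := by
    apply Integrable.mono' (h_int.const_mul (1 / (2 * (m:ℝ)))) hs_meas
    rw [ae_restrict_iff' measurableSet_Ioi]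
    exact ae_of_all _ (fun r hr => by
      rw [Real.norm_eq_abs, abs_of_nonneg (hs_nonneg r)]
      exact hs_bound r hr)
  have hJle : (∫ r in Ioi (0:ℝ), s r) ≤ (1 / (2 * (m:ℝ))) * ∫ r in Ioi (0:ℝ), Eint r := by
    rw [← MeasureTheory.integral_const_mul]
    exact setIntegral_mono_on hs_int (h_int.const_mul _) measurableSet_Ioi hs_bound
  -- pointwise bound: 2*(1 - cos(u r)) ≤ ∫ s
  have hcos : ∀ r ∈ Ioi (0:ℝ), 2 * (1 - Real.cos (u r)) ≤ ∫ t in Ioi (0:ℝ), s t := by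
    intro r hr
    have hr0 : (0:ℝ) < r := hr
    have hsplit : (∫ t in Ioi (0:ℝ), s t)
        = (∫ t in Ioc (0:ℝ) r, s t) + ∫ t in Ioi r, s t := by
      rw [← setIntegral_union Ioc_disjoint_Ioi_same measurableSet_Ioi
        (hs_int.mono_set Ioc_subset_Ioi_self) (hs_int.mono_set (Ioi_subset_Ioi hr0.le)),
        Ioc_union_Ioi_eq_Ioi hr0.le]
    have key : ∀ a b : ℝ, 0 < a → a ≤ b →
        |Real.cos (u b) - Real.cos (u a)| ≤ ∫ t in Ioc a b, s t := by
      intro a b ha hab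
      have h1 := key_ineq_s5 u a b hab (hAC a b ha hab).1
        (fun x hx => (hAC a x ha hx.1).2) (hcont a b ha hab)
      rwa [intervalIntegral.integral_of_le hab] at h1
    have h1 : 1 - Real.cos (u r) ≤ ∫ t in Ioc (0:ℝ) r, s t := by
      have hev : ∀ᶠ a in nhdsWithin (0:ℝ) (Ioi 0),
          Real.cos (u a) ≤ Real.cos (u r) + ∫ t in Ioc (0:ℝ) r, s t := by
        filter_upwards [Ioo_mem_nhdsGT_of_mem
          (show (0:ℝ) ∈ Ico (0:ℝ) r from ⟨le_refl _, hr0⟩)] with a ha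
        have h2 := key a r ha.1 ha.2.le
        have h3 : (∫ t in Ioc a r, s t) ≤ ∫ t in Ioc (0:ℝ) r, s t :=
          setIntegral_mono_set (hs_int.mono_set Ioc_subset_Ioi_self)
            (ae_of_all _ (fun t => hs_nonneg t))
            (HasSubset.Subset.eventuallyLE (Ioc_subset_Ioc_left ha.1.le))
        have h4 : Real.cos (u a) - Real.cos (u r) ≤ |Real.cos (u r) - Real.cos (u a)| := by
          rw [abs_sub_comm]; exact le_abs_self _
        linarith
      have hlim : Tendsto (fun a => Real.cos (u a)) (nhdsWithin (0:ℝ) (Ioi 0)) (nhds 1) := by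
        have := (Real.continuous_cos.tendsto 0).comp hu0
        rwa [Real.cos_zero] at this
      linarith [le_of_tendsto hlim hev]
    have h2 : 1 - Real.cos (u r) ≤ ∫ t in Ioi r, s t := by
      have hev : ∀ᶠ b in atTop,
          Real.cos (u b) ≤ Real.cos (u r) + ∫ t in Ioi r, s t := by
        filter_upwards [eventually_ge_atTop r] with b hb
        have h2 := key r b hr0 hb
        have h3 : (∫ t in Ioc r b, s t) ≤ ∫ t in Ioi r, s t :=
          setIntegral_mono_set (hs_int.mono_set (Ioi_subset_Ioi hr0.le))
            (ae_of_all _ (fun t => hs_nonneg t))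
            (HasSubset.Subset.eventuallyLE Ioc_subset_Ioi_self)
        have h4 : Real.cos (u b) - Real.cos (u r) ≤ |Real.cos (u b) - Real.cos (u r)| :=
          le_abs_self _
        linarith
      have hlim : Tendsto (fun b => Real.cos (u b)) atTop (nhds 1) := by
        have := (Real.continuous_cos.tendsto 0).comp huinf
        rwa [Real.cos_zero] at this
      linarith [le_of_tendsto hlim hev]
    linarith
  -- hence cos (u r) ≥ cos M
  have hcosge : ∀ r ∈ Ioi (0:ℝ), Real.cos M ≤ Real.cos (u r) := by
    intro r hr
    have h1 := hcos r hr
    have hI2 : (∫ r in Ioi (0:ℝ), Eint r) ≤ 2 * (4 * (m:ℝ) - δ₁) := by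
      rw [hcorot_eq] at hE; linarith
    have hJ2 : 2 * (1 - Real.cos (u r)) ≤ (1 / (2 * (m:ℝ))) * (2 * (4 * (m:ℝ) - δ₁)) :=
      le_trans h1 (le_trans hJle (mul_le_mul_of_nonneg_left hI2 (by positivity)))
    have he1 : (1 / (2 * (m:ℝ))) * (2 * (4 * (m:ℝ) - δ₁)) = 4 - δ₁ / (m:ℝ) := by
      field_simp
    have he2 : 2 * ε ≤ δ₁ / (m:ℝ) := by
      have h3 : ε ≤ δ₁ / (2 * (m:ℝ)) := min_le_left _ _
      have h4 : δ₁ / (m:ℝ) = 2 * (δ₁ / (2 * (m:ℝ))) := by field_simp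
      linarith
    rw [hcosM]
    linarith [hJ2.trans_eq he1]
  -- sup bound: |u r| ≤ M for all r > 0
  have hsup : ∀ r ∈ Ioi (0:ℝ), |u r| ≤ M := by
    intro r₀ hr₀
    by_contra hM'
    push_neg at hM'
    have hr₀0 : (0:ℝ) < r₀ := hr₀
    have hpi : Real.pi < |u r₀| := by
      by_contra hpi'
      push_neg at hpi'
      have h1 : Real.cos (|u r₀|) < Real.cos M :=
        Real.strictAntiOn_cos ⟨hM0.le, hMpi.le⟩ ⟨abs_nonneg _, hpi'⟩ hM'
      rw [Real.cos_abs] at h1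
      exact absurd (hcosge r₀ hr₀) (not_le.2 h1)
    -- find a point where |u| < π
    have hev1 : ∀ᶠ a in nhdsWithin (0:ℝ) (Ioi 0), u a ∈ Ioo (-Real.pi) Real.pi :=
      hu0.eventually (by
        filter_upwards [Ioo_mem_nhds (show -Real.pi < (0:ℝ) by linarith [Real.pi_pos])
          Real.pi_pos] with y hy using hy)
    obtain ⟨r₁, hr₁v, hr₁p⟩ := (hev1.and self_mem_nhdsWithin).exists
    have hr₁0 : (0:ℝ) < r₁ := hr₁p
    have hIsub : uIcc r₁ r₀ ⊆ Ioi (0:ℝ) := fun t ht =>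
      lt_of_lt_of_le (lt_min hr₁0 hr₀0) ht.1
    have hucont : ContinuousOn u (uIcc r₁ r₀) := huC.mono hIsub
    have hiv := intermediate_value_uIcc hucont
    rcases le_or_gt 0 (u r₀) with hsgn | hsgn
    · have hval : Real.pi ∈ uIcc (u r₁) (u r₀) := by
        apply mem_uIcc.2 (Or.inl ⟨hr₁v.2.le, ?_⟩)
        rw [abs_of_nonneg hsgn] at hpi
        exact hpi.le
      obtain ⟨t, htm, htv⟩ := hiv hval
      have := hcosge t (hIsub htm)
      rw [htv, Real.cos_pi, hcosM] at this
      linarith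
    · have hval : -Real.pi ∈ uIcc (u r₁) (u r₀) := by
        apply mem_uIcc.2 (Or.inr ⟨?_, hr₁v.1.le⟩)
        rw [abs_of_nonpos hsgn.le] at hpi
        linarith
      obtain ⟨t, htm, htv⟩ := hiv hval
      have := hcosge t (hIsub htm)
      rw [htv, Real.cos_neg, Real.cos_pi, hcosM] at this
      linarith
  -- pointwise comparison of integrands
  have hpt : ∀ r ∈ Ioi (0:ℝ), X2int r ≤ (1 / c) * Eint r := by
    intro r hr
    have hr0 : (0:ℝ) < r := hr
    have hsin2 : c * (u r) ^ 2 ≤ Real.sin (u r) ^ 2 :=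
      sin_sq_lower M (u r) hM0 hMpi.le (hsup r hr)
    have hkey : c * X2int r ≤ Eint r := by
      have e1 : c * X2int r = (c * g r ^ 2 + (m:ℝ) ^ 2 * (c * (u r) ^ 2) / r ^ 2) * r := by
        simp only [hX2intdef]; ring
      rw [e1]
      apply mul_le_mul_of_nonneg_right _ hr0.le
      apply add_le_add
      · nlinarith [sq_nonneg (g r)]
      · gcongr
    have h2 : X2int r ≤ Eint r / c := (le_div_iff₀ hc0).2 (by rw [mul_comm]; exact hkey)
    have h3 : (1:ℝ) / c * Eint r = Eint r / c := by ring
    rw [h3]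
    exact h2
  -- X2int is integrable
  have hX2meas : AEStronglyMeasurable X2int (volume.restrict (Ioi (0:ℝ))) := by
    apply AEMeasurable.aestronglyMeasurable
    have h1 : AEMeasurable (fun r => g r ^ 2) (volume.restrict (Ioi (0:ℝ))) :=
      (hgM.pow_const 2).aemeasurable.restrict
    have h2 : AEMeasurable (fun r : ℝ => (m:ℝ) ^ 2 * (u r) ^ 2 / r ^ 2)
        (volume.restrict (Ioi (0:ℝ))) :=
      (aemeasurable_const.mul (huM.pow_const 2)).div
        ((measurable_id.pow_const 2).aemeasurable.restrict)
    exact (h1.add h2).mul aemeasurable_id.restrict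
  have hX2Int : IntegrableOn X2int (Ioi (0:ℝ)) := by
    apply Integrable.mono' (h_int.const_mul (1 / c)) hX2meas
    rw [ae_restrict_iff' measurableSet_Ioi]
    exact ae_of_all _ (fun r hr => by
      rw [Real.norm_eq_abs, abs_of_nonneg (hX2int_nonneg r hr)]
      exact hpt r hr)
  have hX2le : X2sq m u ≤ (1 / c) * ∫ r in Ioi (0:ℝ), Eint r := by
    rw [hX2_eq, ← MeasureTheory.integral_const_mul]
    exact setIntegral_mono_on hX2Int (h_int.const_mul _) measurableSet_Ioi hpt
  have hEleX2 : (∫ r in Ioi (0:ℝ), Eint r) ≤ X2sq m u := by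
    rw [hX2_eq]
    apply setIntegral_mono_on h_int hX2Int measurableSet_Ioi
    intro r hr
    have hr0 : (0:ℝ) < r := hr
    have hss : Real.sin (u r) ^ 2 ≤ (u r) ^ 2 := Real.sin_sq_le_sq
    simp only [hEintdef, hX2intdef]
    gcongr
  have hX2nonneg : 0 ≤ X2sq m u := by
    rw [hX2_eq]; exact setIntegral_nonneg measurableSet_Ioi hX2int_nonneg
  constructor
  · have hg1 : (1 / (2 / c)) * X2sq m u = (c / 2) * X2sq m u := by
      rw [one_div_div]
    rw [hg1]
    calc (c / 2) * X2sq m u ≤ (c / 2) * ((1 / c) * ∫ r in Ioi (0:ℝ), Eint r) :=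
          mul_le_mul_of_nonneg_left hX2le (by positivity)
      _ = (1 / 2) * ∫ r in Ioi (0:ℝ), Eint r := by
          field_simp
      _ = corotE m u := hcorot_eq.symm
  · have h12 : (1:ℝ) / 2 ≤ 2 / c := by
      have h1 : (2:ℝ) ≤ 2 / c := (le_div_iff₀ hc0).2 (by linarith)
      linarith
    have ha : corotE m u ≤ (1 / 2) * X2sq m u := by
      rw [hcorot_eq]
      exact mul_le_mul_of_nonneg_left hEleX2 (by norm_num)
    calc corotE m u ≤ (1 / 2) * X2sq m u := ha
      _ ≤ (2 / c) * X2sq m u := mul_le_mul_of_nonneg_right h12 hX2nonneg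
end

section
/- Let m ≥ 1 be an integer and let v : (0,∞) → ℝ be continuously differentiable with compact support in (0,∞). Set u(r) = r^m v(r). Then ∫₀^∞ (u'(r)² + m² u(r)²/r²) r dr = ∫₀^∞ v'(r)² r^{2m+1} dr; that is, the map u ↦ u/r^m is an isometry (up to the constant surface measure factor) from the X² norm onto the norm of radial Ḣ¹(ℝ^{2m+2}). -/
open MeasureTheory Filter Set

/-- The substitution `u(r) = r^m v(r)` carries the `X²` norm onto the radial
`Ḣ¹(ℝ^{2m+2})` norm (up to the constant surface measure factor). -/
theorem X2_isometry_to_higher_dimensional_H1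
    (m : ℕ) (hm : 1 ≤ m) (v : ℝ → ℝ) (hv : ContDiff ℝ 1 v)
    (hcpt : HasCompactSupport v) (hsupp : tsupport v ⊆ Set.Ioi (0:ℝ)) :
    (∫ r in Set.Ioi (0:ℝ),
        (deriv (fun ρ => ρ ^ m * v ρ) r ^ 2
          + (m:ℝ)^2 * (r ^ m * v r) ^ 2 / r ^ 2) * r)
      = ∫ r in Set.Ioi (0:ℝ), deriv v r ^ 2 * r ^ (2 * m + 1) := by
  obtain ⟨k, rfl⟩ : ∃ k, m = k + 1 := ⟨m - 1, (Nat.succ_pred_eq_of_pos hm).symm⟩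
  set m := k + 1 with hmdef
  have hvd : Differentiable ℝ v := hv.differentiable one_ne_zero
  set F : ℝ → ℝ := fun r => ((m : ℝ) * r ^ (2 * m) * v r) * v r with hF
  have hFc : ContDiff ℝ 1 F :=
    ((contDiff_const.mul (contDiff_id.pow _)).mul hv).mul hv
  have hFcpt : HasCompactSupport F := hcpt.mul_left
  have hF0 : ∫ r in Set.Ioi (0:ℝ), deriv F r = 0 := by
    rw [hFcpt.integral_Ioi_deriv_eq hFc]
    simp [hF]
  have hderivF : ∀ r : ℝ, deriv F r =
      ((m : ℝ) * ((2 * m : ℕ) * r ^ (2 * m - 1)) * v r + (m : ℝ) * r ^ (2 * m) * deriv v r) * v r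
        + ((m : ℝ) * r ^ (2 * m) * v r) * deriv v r := by
    intro r
    have h1 : HasDerivAt (fun r : ℝ => (m : ℝ) * r ^ (2 * m))
        ((m : ℝ) * ((2 * m : ℕ) * r ^ (2 * m - 1))) r :=
      (hasDerivAt_pow (2 * m) r).const_mul _
    have h2 := (hvd r).hasDerivAt
    exact (((h1.mul h2).mul h2)).deriv
  -- integrability
  have hdvc : Continuous (deriv v) := hv.continuous_deriv le_rfl
  have hgc : Continuous (fun r : ℝ => deriv v r ^ 2 * r ^ (2 * m + 1)) :=
    (hdvc.pow 2).mul (continuous_pow _)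
  have hgcpt : HasCompactSupport (fun r : ℝ => deriv v r ^ 2 * r ^ (2 * m + 1)) := by
    apply hcpt.deriv.mono'
    intro r hr
    apply subset_tsupport
    simp only [Function.mem_support, ne_eq] at hr ⊢
    intro h
    exact hr (by simp [h])
  have hgi : IntegrableOn (fun r : ℝ => deriv v r ^ 2 * r ^ (2 * m + 1)) (Set.Ioi (0:ℝ)) :=
    (hgc.integrable_of_hasCompactSupport hgcpt).integrableOn
  have hFi : IntegrableOn (deriv F) (Set.Ioi (0:ℝ)) :=
    ((hFc.continuous_deriv le_rfl).integrable_of_hasCompactSupport hFcpt.deriv).integrableOn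
  have key : (∫ r in Set.Ioi (0:ℝ),
        (deriv (fun ρ => ρ ^ m * v ρ) r ^ 2
          + (m:ℝ)^2 * (r ^ m * v r) ^ 2 / r ^ 2) * r)
      = ∫ r in Set.Ioi (0:ℝ), (deriv v r ^ 2 * r ^ (2 * m + 1) + deriv F r) := by
    apply setIntegral_congr_fun measurableSet_Ioi
    intro r hr
    have hr0 : (0:ℝ) < r := hr
    have hu : deriv (fun ρ : ℝ => ρ ^ m * v ρ) r
        = (m : ℝ) * r ^ (m - 1) * v r + r ^ m * deriv v r := by
      have h1 : HasDerivAt (fun ρ : ℝ => ρ ^ m) ((m : ℝ) * r ^ (m - 1)) r :=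
        hasDerivAt_pow m r
      exact (h1.mul (hvd r).hasDerivAt).deriv
    have hk : m - 1 = k := rfl
    have hk2 : 2 * m - 1 = 2 * k + 1 := rfl
    beta_reduce
    rw [hu, hderivF, hk, hk2]
    simp only [hmdef]
    push_cast
    field_simp
    ring
  rw [key, integral_add hgi hFi, hF0, add_zero]
end

section
/- Let m ≥ 1 be an integer, let φ, ψ : (0,∞) → ℝ have finite X² norm, and let λ_n, μ_n > 0 be sequences with λ_n/μ_n + μ_n/λ_n → ∞ as n → ∞. Then ∫₀^∞ |φ(r/λ_n)| |ψ(r/μ_n)| r^{−1} dr → 0 as n → ∞. -/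
open MeasureTheory Filter Set

namespace CrossAux

noncomputable def W (m : ℕ) (u : ℝ → ℝ) : ℝ → ℝ :=
  fun r => (deriv u r ^ 2 + (m:ℝ)^2 * u r ^ 2 / r ^ 2) * r

variable {m : ℕ} {u : ℝ → ℝ}

lemma aemeas_sq_comp (hm : 1 ≤ m) (hu : IntegrableOn (W m u) (Ioi 0)) {c : ℝ} (hc : 0 < c) :
    AEMeasurable (fun r => u (r / c) ^ 2) (volume.restrict (Ioi (0:ℝ))) := by
  have hm0 : ((m:ℝ)) ≠ 0 := by positivity
  have hWc : IntegrableOn (fun r => W m u (c⁻¹ * r)) (Ioi 0) := by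
    have h := (integrableOn_Ioi_comp_mul_left_iff (W m u) 0 (inv_pos.2 hc)).2
      (by simpa using hu)
    simpa using h
  have hWm : AEMeasurable (fun r => W m u (c⁻¹ * r)) (volume.restrict (Ioi (0:ℝ))) :=
    hWc.aemeasurable
  have hd : Measurable fun r : ℝ => deriv u (c⁻¹ * r) :=
    (measurable_deriv u).comp (measurable_const_mul _)
  have key : AEMeasurable
      (fun r => (W m u (c⁻¹*r) - deriv u (c⁻¹*r)^2 * (c⁻¹*r)) * (c⁻¹*r) / (m:ℝ)^2)
      (volume.restrict (Ioi (0:ℝ))) := by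
    exact (((hWm.sub (((hd.pow_const 2).mul (measurable_const_mul c⁻¹)).aemeasurable)).mul
      (measurable_const_mul c⁻¹).aemeasurable).div_const _)
  refine key.congr ?_
  rw [Filter.EventuallyEq, ae_restrict_iff' measurableSet_Ioi]
  filter_upwards with r hr
  have hrpos : (0:ℝ) < r := hr
  have hrne : r ≠ 0 := ne_of_gt hrpos
  have hr0 : (0:ℝ) < c⁻¹ * r := by positivity
  have hrc : r / c = c⁻¹ * r := by rw [div_eq_inv_mul]
  rw [hrc]
  simp only [W]
  field_simp
  ring_nf

lemma integrableOn_sq_div (hm : 1 ≤ m) (hu : IntegrableOn (W m u) (Ioi 0)) :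
    IntegrableOn (fun r => u r ^ 2 / r) (Ioi (0:ℝ)) := by
  have hmeas : AEMeasurable (fun r => u r ^ 2) (volume.restrict (Ioi (0:ℝ))) := by
    have := aemeas_sq_comp hm hu (c := 1) one_pos
    simpa using this
  refine Integrable.mono' hu ((hmeas.div aemeasurable_id).aestronglyMeasurable) ?_
  rw [ae_restrict_iff' measurableSet_Ioi]
  filter_upwards with r hr
  have hr0 : (0:ℝ) < r := hr
  have h1 : |u r ^ 2 / r| = u r ^ 2 / r := abs_of_nonneg (by positivity)
  rw [Real.norm_eq_abs, h1]
  have hm2 : (1:ℝ) ≤ (m:ℝ)^2 := by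
    have : (1:ℝ) ≤ (m:ℝ) := by exact_mod_cast hm
    nlinarith
  simp only [W]
  rw [div_le_iff₀ hr0] at *
  have : u r ^ 2 ≤ (deriv u r ^ 2 + (m:ℝ)^2 * u r ^ 2 / r ^ 2) * r * r := by
    have h2 : (m:ℝ)^2 * u r ^ 2 / r ^ 2 * r * r = (m:ℝ)^2 * u r ^ 2 := by
      field_simp
    nlinarith [sq_nonneg (deriv u r), sq_nonneg (u r), sq_nonneg r]
  linarith


lemma integrableOn_sq_div_comp (hm : 1 ≤ m) (hu : IntegrableOn (W m u) (Ioi 0))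
    {c : ℝ} (hc : 0 < c) :
    IntegrableOn (fun r => u (r / c) ^ 2 / r) (Ioi (0:ℝ)) := by
  have base := integrableOn_sq_div hm hu
  have h1 : IntegrableOn (fun r => u (c⁻¹ * r) ^ 2 / (c⁻¹ * r)) (Ioi (0:ℝ)) := by
    have h := (integrableOn_Ioi_comp_mul_left_iff (fun s => u s ^ 2 / s) 0
      (inv_pos.2 hc)).2 (by simpa using base)
    simpa using h
  have h2 := h1.const_mul c⁻¹
  refine IntegrableOn.congr_fun h2 (fun r hr => ?_) measurableSet_Ioi
  have hrne : r ≠ 0 := ne_of_gt hr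
  rw [div_eq_inv_mul]
  field_simp

lemma scale_eval (u : ℝ → ℝ) {c b : ℝ} (hc : 0 < c) :
    ∫ r in Ioi b, u (r / c) ^ 2 / r = ∫ s in Ioi (c⁻¹ * b), u s ^ 2 / s := by
  have h := integral_comp_mul_left_Ioi (fun s => u s ^ 2 / s) b (inv_pos.2 hc)
  have e1 : (∫ r in Ioi b, u (r / c) ^ 2 / r)
      = ∫ r in Ioi b, c⁻¹ * (u (c⁻¹ * r) ^ 2 / (c⁻¹ * r)) := by
    congr 1
    funext r
    rcases eq_or_ne r 0 with rfl | hrne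
    · simp
    · rw [div_eq_inv_mul]
      field_simp
  rw [e1, integral_const_mul, h, smul_eq_mul, inv_inv, ← mul_assoc,
    inv_mul_cancel₀ (ne_of_gt hc), one_mul]

lemma cs_integral {f g : ℝ → ℝ} {μ : Measure ℝ}
    (hfm : AEMeasurable f μ) (hgm : AEMeasurable g μ)
    (hf : Integrable (fun x => f x ^ 2) μ) (hg : Integrable (fun x => g x ^ 2) μ)
    (hf0 : 0 ≤ᵐ[μ] f) (hg0 : 0 ≤ᵐ[μ] g) :
    ∫ x, f x * g x ∂μ ≤ Real.sqrt ((∫ x, f x ^ 2 ∂μ) * ∫ x, g x ^ 2 ∂μ) := by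
  have hpq : (2:ℝ).HolderConjugate 2 := Real.holderConjugate_iff.2 ⟨one_lt_two, by norm_num⟩
  have hf2 : MemLp f (ENNReal.ofReal 2) μ := by
    rw [show ENNReal.ofReal 2 = 2 by norm_num]
    exact (memLp_two_iff_integrable_sq hfm.aestronglyMeasurable).2 hf
  have hg2 : MemLp g (ENNReal.ofReal 2) μ := by
    rw [show ENNReal.ofReal 2 = 2 by norm_num]
    exact (memLp_two_iff_integrable_sq hgm.aestronglyMeasurable).2 hg
  have h := integral_mul_le_Lp_mul_Lq_of_nonneg hpq hf0 hg0 hf2 hg2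
  have ef : (∫ x, f x ^ (2:ℝ) ∂μ) = ∫ x, f x ^ 2 ∂μ := by
    congr 1; funext x
    rw [show (2:ℝ) = ((2:ℕ):ℝ) by norm_num, Real.rpow_natCast]
  have eg : (∫ x, g x ^ (2:ℝ) ∂μ) = ∫ x, g x ^ 2 ∂μ := by
    congr 1; funext x
    rw [show (2:ℝ) = ((2:ℕ):ℝ) by norm_num, Real.rpow_natCast]
  rw [ef, eg] at h
  have hI : 0 ≤ ∫ x, f x ^ 2 ∂μ := integral_nonneg fun x => sq_nonneg _
  have hJ : 0 ≤ ∫ x, g x ^ 2 ∂μ := integral_nonneg fun x => sq_nonneg _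
  rw [Real.sqrt_mul hI]
  calc ∫ x, f x * g x ∂μ ≤ (∫ x, f x ^ 2 ∂μ) ^ ((1:ℝ)/2) * (∫ x, g x ^ 2 ∂μ) ^ ((1:ℝ)/2) := h
    _ = Real.sqrt (∫ x, f x ^ 2 ∂μ) * Real.sqrt (∫ x, g x ^ 2 ∂μ) := by
        rw [Real.sqrt_eq_rpow, Real.sqrt_eq_rpow]


noncomputable def TailI (u : ℝ → ℝ) (b : ℝ) : ℝ := ∫ r in Ioi b, u r ^ 2 / r

noncomputable def HeadI (u : ℝ → ℝ) (a : ℝ) : ℝ := ∫ r in Ioo 0 a, u r ^ 2 / r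

lemma split_integral {h : ℝ → ℝ} (hint : IntegrableOn h (Ioi 0)) {t : ℝ} (ht : 0 < t) :
    ∫ r in Ioi (0:ℝ), h r = (∫ r in Ioo 0 t, h r) + ∫ r in Ioi t, h r := by
  have hsub1 : Ioo (0:ℝ) t ⊆ Ioi 0 := Ioo_subset_Ioi_self
  have hsub2 : Ici t ⊆ Ioi (0:ℝ) := fun x hx => lt_of_lt_of_le ht hx
  have hdisj : Disjoint (Ioo (0:ℝ) t) (Ici t) :=
    (Iio_disjoint_Ici le_rfl).mono_left Ioo_subset_Iio_self
  have hu := setIntegral_union hdisj measurableSet_Ici (hint.mono_set hsub1)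
    (hint.mono_set hsub2) (f := h) (μ := volume)
  rw [Ioo_union_Ici_eq_Ioi ht] at hu
  rw [hu, integral_Ici_eq_integral_Ioi]

lemma tail_nonneg (u : ℝ → ℝ) {b : ℝ} (hb : 0 ≤ b) : 0 ≤ TailI u b := by
  refine setIntegral_nonneg measurableSet_Ioi fun r hr => ?_
  have : 0 < r := lt_of_le_of_lt hb hr
  positivity

lemma head_nonneg (u : ℝ → ℝ) (a : ℝ) : 0 ≤ HeadI u a := by
  refine setIntegral_nonneg measurableSet_Ioo fun r hr => ?_
  have : 0 < r := hr.1
  positivity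

lemma nonneg_on_Ioi (u : ℝ → ℝ) :
    0 ≤ᵐ[volume.restrict (Ioi (0:ℝ))] fun r => u r ^ 2 / r := by
  rw [EventuallyLE, ae_restrict_iff' measurableSet_Ioi]
  filter_upwards with r hr
  have : (0:ℝ) < r := hr
  simp only [Pi.zero_apply]
  positivity

lemma tail_le_tail (hq : IntegrableOn (fun r => u r ^ 2 / r) (Ioi (0:ℝ)))
    {b : ℝ} (hb : 0 ≤ b) : TailI u b ≤ TailI u 0 :=
  setIntegral_mono_set hq (nonneg_on_Ioi u) (HasSubset.Subset.eventuallyLE (Ioi_subset_Ioi hb))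

lemma head_le_tail (hq : IntegrableOn (fun r => u r ^ 2 / r) (Ioi (0:ℝ)))
    (a : ℝ) : HeadI u a ≤ TailI u 0 :=
  setIntegral_mono_set hq (nonneg_on_Ioi u) (HasSubset.Subset.eventuallyLE Ioo_subset_Ioi_self)

lemma head_mono (hq : IntegrableOn (fun r => u r ^ 2 / r) (Ioi (0:ℝ)))
    {a a' : ℝ} (h : a ≤ a') : HeadI u a ≤ HeadI u a' := by
  refine setIntegral_mono_set (hq.mono_set Ioo_subset_Ioi_self) ?_
    (HasSubset.Subset.eventuallyLE (Ioo_subset_Ioo_right h))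
  exact (ae_restrict_of_ae_restrict_of_subset Ioo_subset_Ioi_self (nonneg_on_Ioi u))

lemma tail_split (hq : IntegrableOn (fun r => u r ^ 2 / r) (Ioi (0:ℝ)))
    {t : ℝ} (ht : 0 < t) : TailI u 0 = HeadI u t + TailI u t :=
  split_integral hq ht

lemma tail_tendsto (hq : IntegrableOn (fun r => u r ^ 2 / r) (Ioi (0:ℝ))) :
    Tendsto (TailI u) atTop (nhds 0) := by
  have hempty : ⋂ b : ℝ, Ioi b = (∅ : Set ℝ) := by
    ext x
    simp only [mem_iInter, mem_Ioi, mem_empty_iff_false, iff_false, not_forall, not_lt]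
    exact ⟨x, le_rfl⟩
  have h := tendsto_setIntegral_of_antitone (f := fun r => u r ^ 2 / r) (μ := volume)
    (s := fun b : ℝ => Ioi b) (fun b => measurableSet_Ioi)
    (fun i j hij => Ioi_subset_Ioi hij) ⟨0, hq⟩
  rw [hempty] at h
  have e : TailI u = fun i => ∫ x in Ioi i, u x ^ 2 / x := rfl
  rw [e]
  simpa using h

lemma head_tendsto (hq : IntegrableOn (fun r => u r ^ 2 / r) (Ioi (0:ℝ))) :
    Tendsto (fun n : ℕ => HeadI u (1 / (n + 1))) atTop (nhds 0) := by
  have hempty : ⋂ n : ℕ, Ioo (0:ℝ) (1 / (n + 1)) = (∅ : Set ℝ) := by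
    ext x
    simp only [mem_iInter, mem_Ioo, mem_empty_iff_false, iff_false, not_forall]
    by_cases hx : 0 < x
    · obtain ⟨n, hn⟩ := exists_nat_one_div_lt hx
      exact ⟨n, fun h => absurd h.2 (not_lt.2 hn.le)⟩
    · exact ⟨0, fun h => hx h.1⟩
  have h := tendsto_setIntegral_of_antitone (f := fun r => u r ^ 2 / r) (μ := volume)
    (s := fun n : ℕ => Ioo (0:ℝ) (1 / (n + 1)))
    (fun n => measurableSet_Ioo)
    (fun i j hij => Ioo_subset_Ioo_right (by
      apply one_div_le_one_div_of_le
      · positivity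
      · exact_mod_cast Nat.add_le_add_right hij 1))
    ⟨0, hq.mono_set Ioo_subset_Ioi_self⟩
  rw [hempty] at h
  simpa [HeadI] using h


lemma key (hm : 1 ≤ m) {φ ψ : ℝ → ℝ}
    (hφ : IntegrableOn (W m φ) (Ioi 0)) (hψ : IntegrableOn (W m ψ) (Ioi 0))
    {lam mu : ℝ} (hlam : 0 < lam) (hmu : 0 < mu) :
    ∫ r in Ioi (0:ℝ), |φ (r / lam)| * |ψ (r / mu)| / r ≤
      Real.sqrt (HeadI φ (lam⁻¹ * Real.sqrt (lam * mu)) * HeadI ψ (mu⁻¹ * Real.sqrt (lam * mu)))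
      + Real.sqrt (TailI φ (lam⁻¹ * Real.sqrt (lam * mu)) * TailI ψ (mu⁻¹ * Real.sqrt (lam * mu))) := by
  set t := Real.sqrt (lam * mu) with htdef
  have ht : 0 < t := Real.sqrt_pos.2 (by positivity)
  have Iφ : IntegrableOn (fun r => φ (r / lam) ^ 2 / r) (Ioi (0:ℝ)) :=
    integrableOn_sq_div_comp hm hφ hlam
  have Iψ : IntegrableOn (fun r => ψ (r / mu) ^ 2 / r) (Ioi (0:ℝ)) :=
    integrableOn_sq_div_comp hm hψ hmu
  have mφ : AEMeasurable (fun r => φ (r / lam) ^ 2) (volume.restrict (Ioi (0:ℝ))) :=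
    aemeas_sq_comp hm hφ hlam
  have mψ : AEMeasurable (fun r => ψ (r / mu) ^ 2) (volume.restrict (Ioi (0:ℝ))) :=
    aemeas_sq_comp hm hψ hmu
  have absφ : AEMeasurable (fun r => |φ (r / lam)|) (volume.restrict (Ioi (0:ℝ))) := by
    have he : (fun r => |φ (r / lam)|) = fun r => Real.sqrt (φ (r / lam) ^ 2) :=
      funext fun r => (Real.sqrt_sq_eq_abs _).symm
    rw [he]
    exact Real.continuous_sqrt.measurable.comp_aemeasurable mφ
  have absψ : AEMeasurable (fun r => |ψ (r / mu)|) (volume.restrict (Ioi (0:ℝ))) := by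
    have he : (fun r => |ψ (r / mu)|) = fun r => Real.sqrt (ψ (r / mu) ^ 2) :=
      funext fun r => (Real.sqrt_sq_eq_abs _).symm
    rw [he]
    exact Real.continuous_sqrt.measurable.comp_aemeasurable mψ
  have Pint : IntegrableOn (fun r => |φ (r / lam)| * |ψ (r / mu)| / r) (Ioi (0:ℝ)) := by
    have hdom : IntegrableOn
        (fun r => (φ (r / lam) ^ 2 / r + ψ (r / mu) ^ 2 / r) / 2) (Ioi (0:ℝ)) :=
      (Iφ.add Iψ).div_const 2
    refine Integrable.mono' hdom
      (((absφ.mul absψ).div aemeasurable_id).aestronglyMeasurable) ?_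
    rw [ae_restrict_iff' measurableSet_Ioi]
    filter_upwards with r hr
    have hr0 : (0:ℝ) < r := hr
    rw [Real.norm_eq_abs, abs_of_nonneg (by positivity)]
    have hrw : (φ (r / lam) ^ 2 / r + ψ (r / mu) ^ 2 / r) / 2
        = ((φ (r / lam) ^ 2 + ψ (r / mu) ^ 2) / 2) / r := by ring
    rw [hrw]
    have h1 : |φ (r / lam)| * |ψ (r / mu)| ≤ (φ (r / lam) ^ 2 + ψ (r / mu) ^ 2) / 2 := by
      nlinarith [sq_nonneg (|φ (r / lam)| - |ψ (r / mu)|), sq_abs (φ (r / lam)),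
        sq_abs (ψ (r / mu))]
    gcongr
  have main : ∀ S : Set ℝ, MeasurableSet S → S ⊆ Ioi 0 →
      (∫ r in S, |φ (r / lam)| * |ψ (r / mu)| / r) ≤
        Real.sqrt ((∫ r in S, φ (r / lam) ^ 2 / r) * ∫ r in S, ψ (r / mu) ^ 2 / r) := by
    intro S hSm hS
    have hres : volume.restrict S ≤ volume.restrict (Ioi (0:ℝ)) :=
      Measure.restrict_mono hS le_rfl
    set f : ℝ → ℝ := fun r => |φ (r / lam)| / Real.sqrt r with hf
    set g : ℝ → ℝ := fun r => |ψ (r / mu)| / Real.sqrt r with hg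
    have hfm : AEMeasurable f (volume.restrict S) :=
      (absφ.mono_measure hres).div Real.continuous_sqrt.measurable.aemeasurable
    have hgm : AEMeasurable g (volume.restrict S) :=
      (absψ.mono_measure hres).div Real.continuous_sqrt.measurable.aemeasurable
    have hfsq : ∀ r ∈ S, f r ^ 2 = φ (r / lam) ^ 2 / r := by
      intro r hr
      have hr0 : (0:ℝ) < r := hS hr
      simp only [hf]
      rw [div_pow, sq_abs, Real.sq_sqrt hr0.le]
    have hgsq : ∀ r ∈ S, g r ^ 2 = ψ (r / mu) ^ 2 / r := by
      intro r hr
      have hr0 : (0:ℝ) < r := hS hr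
      simp only [hg]
      rw [div_pow, sq_abs, Real.sq_sqrt hr0.le]
    have hf2 : Integrable (fun r => f r ^ 2) (volume.restrict S) :=
      IntegrableOn.congr_fun (Iφ.mono_set hS) (fun r hr => (hfsq r hr).symm) hSm
    have hg2 : Integrable (fun r => g r ^ 2) (volume.restrict S) :=
      IntegrableOn.congr_fun (Iψ.mono_set hS) (fun r hr => (hgsq r hr).symm) hSm
    have e0 : (∫ r in S, |φ (r / lam)| * |ψ (r / mu)| / r) = ∫ r in S, f r * g r := by
      refine setIntegral_congr_fun hSm fun r hr => ?_
      have hr0 : (0:ℝ) < r := hS hr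
      simp only [hf, hg]
      rw [div_mul_div_comm, Real.mul_self_sqrt hr0.le]
    have e1 : (∫ r in S, f r ^ 2) = ∫ r in S, φ (r / lam) ^ 2 / r :=
      setIntegral_congr_fun hSm fun r hr => hfsq r hr
    have e2 : (∫ r in S, g r ^ 2) = ∫ r in S, ψ (r / mu) ^ 2 / r :=
      setIntegral_congr_fun hSm fun r hr => hgsq r hr
    rw [e0, ← e1, ← e2]
    exact cs_integral hfm hgm hf2 hg2
      (Eventually.of_forall fun r => by simp only [hf]; positivity)
      (Eventually.of_forall fun r => by simp only [hg]; positivity)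
  have hsplit := split_integral Pint ht
  rw [hsplit]
  have hIoo := main (Ioo 0 t) measurableSet_Ioo Ioo_subset_Ioi_self
  have hIoi := main (Ioi t) measurableSet_Ioi (Ioi_subset_Ioi ht.le)
  have evφtail : (∫ r in Ioi t, φ (r / lam) ^ 2 / r) = TailI φ (lam⁻¹ * t) :=
    scale_eval φ hlam
  have evψtail : (∫ r in Ioi t, ψ (r / mu) ^ 2 / r) = TailI ψ (mu⁻¹ * t) :=
    scale_eval ψ hmu
  have evφ0 : (∫ r in Ioi (0:ℝ), φ (r / lam) ^ 2 / r) = TailI φ 0 := by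
    have h := scale_eval φ (b := 0) hlam
    simpa [TailI] using h
  have evψ0 : (∫ r in Ioi (0:ℝ), ψ (r / mu) ^ 2 / r) = TailI ψ 0 := by
    have h := scale_eval ψ (b := 0) hmu
    simpa [TailI] using h
  have evφhead : (∫ r in Ioo 0 t, φ (r / lam) ^ 2 / r) = HeadI φ (lam⁻¹ * t) := by
    have h1 := split_integral Iφ ht
    have h2 := tail_split (integrableOn_sq_div hm hφ) (t := lam⁻¹ * t) (by positivity)
    rw [evφ0, evφtail, h2] at h1
    linarith
  have evψhead : (∫ r in Ioo 0 t, ψ (r / mu) ^ 2 / r) = HeadI ψ (mu⁻¹ * t) := by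
    have h1 := split_integral Iψ ht
    have h2 := tail_split (integrableOn_sq_div hm hψ) (t := mu⁻¹ * t) (by positivity)
    rw [evψ0, evψtail, h2] at h1
    linarith
  rw [evφhead, evψhead] at hIoo
  rw [evφtail, evψtail] at hIoi
  exact add_le_add hIoo hIoi

end CrossAux

open CrossAux in
theorem cross_term_vanishes_orthogonal_scales'
    (m : ℕ) (hm : 1 ≤ m) (φ ψ : ℝ → ℝ)
    (hφ : IntegrableOn
      (fun r => (deriv φ r ^ 2 + (m:ℝ)^2 * (φ r) ^ 2 / r ^ 2) * r) (Set.Ioi (0:ℝ)))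
    (hψ : IntegrableOn
      (fun r => (deriv ψ r ^ 2 + (m:ℝ)^2 * (ψ r) ^ 2 / r ^ 2) * r) (Set.Ioi (0:ℝ)))
    (lam mu : ℕ → ℝ) (hlam : ∀ n, 0 < lam n) (hmu : ∀ n, 0 < mu n)
    (horth : Tendsto (fun n => lam n / mu n + mu n / lam n) atTop atTop) :
    Tendsto (fun n => ∫ r in Set.Ioi (0:ℝ), |φ (r / lam n)| * |ψ (r / mu n)| / r)
      atTop (nhds 0) := by
  have hφ' : IntegrableOn (W m φ) (Ioi 0) := hφ
  have hψ' : IntegrableOn (W m ψ) (Ioi 0) := hψ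
  have hq1 : IntegrableOn (fun r => φ r ^ 2 / r) (Ioi (0:ℝ)) := integrableOn_sq_div hm hφ'
  have hq2 : IntegrableOn (fun r => ψ r ^ 2 / r) (Ioi (0:ℝ)) := integrableOn_sq_div hm hψ'
  have hKφ : 0 ≤ TailI φ 0 := tail_nonneg φ le_rfl
  have hKψ : 0 ≤ TailI ψ 0 := tail_nonneg ψ le_rfl
  set M : ℝ := max (TailI φ 0) (TailI ψ 0) + 1 with hMdef
  have hM : 0 < M := by
    have := le_max_left (TailI φ 0) (TailI ψ 0)
    simp only [hMdef]
    linarith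
  have hMφ : TailI φ 0 ≤ M := by
    have := le_max_left (TailI φ 0) (TailI ψ 0); simp only [hMdef]; linarith
  have hMψ : TailI ψ 0 ≤ M := by
    have := le_max_right (TailI φ 0) (TailI ψ 0); simp only [hMdef]; linarith
  rw [NormedAddCommGroup.tendsto_nhds_zero]
  intro ε hε
  set η : ℝ := ε ^ 2 / (8 * M) with hηdef
  have hη : 0 < η := by positivity
  obtain ⟨Bφ, hBφ⟩ := eventually_atTop.1 ((tendsto_order.1 (tail_tendsto hq1)).2 η hη)
  obtain ⟨Bψ, hBψ⟩ := eventually_atTop.1 ((tendsto_order.1 (tail_tendsto hq2)).2 η hη)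
  obtain ⟨Nφ, hNφ⟩ := eventually_atTop.1 ((tendsto_order.1 (head_tendsto hq1)).2 η hη)
  obtain ⟨Nψ, hNψ⟩ := eventually_atTop.1 ((tendsto_order.1 (head_tendsto hq2)).2 η hη)
  set A : ℝ := max (max Bφ Bψ) (max ((Nφ:ℝ) + 1) ((Nψ:ℝ) + 1)) + 1 with hAdef
  have hA1 : 1 ≤ A := by
    have h1 : (0:ℝ) ≤ (Nφ:ℝ) + 1 := by positivity
    have h2 := le_max_left ((Nφ:ℝ) + 1) ((Nψ:ℝ) + 1)
    have h3 := le_max_right (max Bφ Bψ) (max ((Nφ:ℝ) + 1) ((Nψ:ℝ) + 1))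
    simp only [hAdef]
    linarith
  have hA0 : 0 < A := lt_of_lt_of_le one_pos hA1
  have hABφ : Bφ ≤ A := by
    have h1 := le_max_left Bφ Bψ
    have h2 := le_max_left (max Bφ Bψ) (max ((Nφ:ℝ) + 1) ((Nψ:ℝ) + 1))
    simp only [hAdef]; linarith
  have hABψ : Bψ ≤ A := by
    have h1 := le_max_right Bφ Bψ
    have h2 := le_max_left (max Bφ Bψ) (max ((Nφ:ℝ) + 1) ((Nψ:ℝ) + 1))
    simp only [hAdef]; linarith
  have hANφ : (Nφ:ℝ) + 1 ≤ A := by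
    have h1 := le_max_left ((Nφ:ℝ) + 1) ((Nψ:ℝ) + 1)
    have h2 := le_max_right (max Bφ Bψ) (max ((Nφ:ℝ) + 1) ((Nψ:ℝ) + 1))
    simp only [hAdef]; linarith
  have hANψ : (Nψ:ℝ) + 1 ≤ A := by
    have h1 := le_max_right ((Nφ:ℝ) + 1) ((Nψ:ℝ) + 1)
    have h2 := le_max_right (max Bφ Bψ) (max ((Nφ:ℝ) + 1) ((Nψ:ℝ) + 1))
    simp only [hAdef]; linarith
  have hTφ : ∀ x : ℝ, A ≤ x → TailI φ x ≤ η := fun x hx =>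
    (hBφ x (le_trans hABφ hx)).le
  have hTψ : ∀ x : ℝ, A ≤ x → TailI ψ x ≤ η := fun x hx =>
    (hBψ x (le_trans hABψ hx)).le
  have hHφ : ∀ x : ℝ, A ≤ x → HeadI φ x⁻¹ ≤ η := by
    intro x hx
    have hx0 : (0:ℝ) < x := lt_of_lt_of_le hA0 hx
    have h1 : x⁻¹ ≤ 1 / ((Nφ:ℝ) + 1) := by
      rw [one_div]
      exact inv_anti₀ (by positivity) (le_trans hANφ hx)
    exact le_trans (head_mono hq1 h1) (hNφ Nφ le_rfl).le
  have hHψ : ∀ x : ℝ, A ≤ x → HeadI ψ x⁻¹ ≤ η := by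
    intro x hx
    have hx0 : (0:ℝ) < x := lt_of_lt_of_le hA0 hx
    have h1 : x⁻¹ ≤ 1 / ((Nψ:ℝ) + 1) := by
      rw [one_div]
      exact inv_anti₀ (by positivity) (le_trans hANψ hx)
    exact le_trans (head_mono hq2 h1) (hNψ Nψ le_rfl).le
  filter_upwards [horth.eventually_ge_atTop (2 * A ^ 2)] with n hn
  set L := lam n with hLdef
  set U := mu n with hUdef
  have hL : 0 < L := hlam n
  have hU : 0 < U := hmu n
  set a : ℝ := Real.sqrt (U / L) with hadef
  have ha : 0 < a := Real.sqrt_pos.2 (by positivity)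
  have hainv : a⁻¹ = Real.sqrt (L / U) := by
    rw [hadef, ← Real.sqrt_inv]
    congr 1
    field_simp
  -- identify scaling points
  have hid1 : L⁻¹ * Real.sqrt (L * U) = a := by
    rw [hadef, show U / L = L⁻¹ ^ 2 * (L * U) by field_simp]
    rw [Real.sqrt_mul (by positivity : (0:ℝ) ≤ L⁻¹ ^ 2), Real.sqrt_sq (by positivity)]
  have hid2 : U⁻¹ * Real.sqrt (L * U) = a⁻¹ := by
    rw [hainv, show L / U = U⁻¹ ^ 2 * (L * U) by field_simp]
    rw [Real.sqrt_mul (by positivity : (0:ℝ) ≤ U⁻¹ ^ 2), Real.sqrt_sq (by positivity)]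
  have hkey := key hm hφ' hψ' hL hU
  rw [hid1, hid2] at hkey
  -- case analysis: one of a, a⁻¹ is ≥ A
  have hcase : A ≤ a ∨ A ≤ a⁻¹ := by
    rcases le_or_gt (A ^ 2) (U / L) with h | h
    · left
      calc A = Real.sqrt (A ^ 2) := (Real.sqrt_sq hA0.le).symm
        _ ≤ a := Real.sqrt_le_sqrt h
    · right
      have h2 : A ^ 2 ≤ L / U := by
        have := hn
        linarith
      calc A = Real.sqrt (A ^ 2) := (Real.sqrt_sq hA0.le).symm
        _ ≤ a⁻¹ := by rw [hainv]; exact Real.sqrt_le_sqrt h2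
  -- bound the two products by M * η
  have hP1 : HeadI φ a * HeadI ψ a⁻¹ ≤ M * η := by
    rcases hcase with hc | hc
    · have h1 : HeadI φ a ≤ M := le_trans (head_le_tail hq1 a) hMφ
      have h2 : HeadI ψ a⁻¹ ≤ η := hHψ a hc
      exact mul_le_mul h1 h2 (head_nonneg ψ _) hM.le
    · have h1 : HeadI φ a ≤ η := by
        have := hHφ a⁻¹ hc
        rwa [inv_inv] at this
      have h2 : HeadI ψ a⁻¹ ≤ M := le_trans (head_le_tail hq2 _) hMψ
      calc HeadI φ a * HeadI ψ a⁻¹ ≤ η * M :=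
            mul_le_mul h1 h2 (head_nonneg ψ _) hη.le
        _ = M * η := mul_comm _ _
  have hP2 : TailI φ a * TailI ψ a⁻¹ ≤ M * η := by
    rcases hcase with hc | hc
    · have h1 : TailI φ a ≤ η := hTφ a hc
      have h2 : TailI ψ a⁻¹ ≤ M := le_trans (tail_le_tail hq2 (by positivity)) hMψ
      calc TailI φ a * TailI ψ a⁻¹ ≤ η * M :=
            mul_le_mul h1 h2 (tail_nonneg ψ (by positivity)) hη.le
        _ = M * η := mul_comm _ _
    · have h1 : TailI φ a ≤ M := le_trans (tail_le_tail hq1 ha.le) hMφ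
      have h2 : TailI ψ a⁻¹ ≤ η := hTψ a⁻¹ hc
      exact mul_le_mul h1 h2 (tail_nonneg ψ (by positivity)) hM.le
  -- conclude
  have hMη : M * η = ε ^ 2 / 8 := by
    rw [hηdef]
    field_simp
  have hsq : Real.sqrt (M * η) < ε / 2 := by
    rw [hMη]
    have h1 : Real.sqrt (ε ^ 2 / 8) < Real.sqrt (ε ^ 2 / 4) :=
      Real.sqrt_lt_sqrt (by positivity) (by nlinarith)
    have h2 : Real.sqrt (ε ^ 2 / 4) = ε / 2 := by
      rw [show ε ^ 2 / 4 = (ε / 2) ^ 2 by ring, Real.sqrt_sq (by positivity)]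
    linarith [h1, h2.le]
  have hIineq : (∫ r in Set.Ioi (0:ℝ), |φ (r / L)| * |ψ (r / U)| / r) < ε := by
    have hb1 : Real.sqrt (HeadI φ a * HeadI ψ a⁻¹) ≤ Real.sqrt (M * η) :=
      Real.sqrt_le_sqrt hP1
    have hb2 : Real.sqrt (TailI φ a * TailI ψ a⁻¹) ≤ Real.sqrt (M * η) :=
      Real.sqrt_le_sqrt hP2
    calc (∫ r in Set.Ioi (0:ℝ), |φ (r / L)| * |ψ (r / U)| / r)
        ≤ _ + _ := hkey
      _ ≤ Real.sqrt (M * η) + Real.sqrt (M * η) := add_le_add hb1 hb2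
      _ < ε / 2 + ε / 2 := by linarith
      _ = ε := by ring
  have hnn : 0 ≤ ∫ r in Set.Ioi (0:ℝ), |φ (r / L)| * |ψ (r / U)| / r :=
    setIntegral_nonneg measurableSet_Ioi fun r hr => by
      have : (0:ℝ) < r := hr
      positivity
  rw [Real.norm_eq_abs, abs_of_nonneg hnn]
  exact hIineq


/-- Cross terms of profiles with asymptotically orthogonal scales vanish. -/
theorem cross_term_vanishes_orthogonal_scales
    (m : ℕ) (hm : 1 ≤ m) (φ ψ : ℝ → ℝ) (hφAC : LocAC φ) (hψAC : LocAC ψ)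
    (hφ : IntegrableOn
      (fun r => (deriv φ r ^ 2 + (m:ℝ)^2 * (φ r) ^ 2 / r ^ 2) * r) (Set.Ioi (0:ℝ)))
    (hψ : IntegrableOn
      (fun r => (deriv ψ r ^ 2 + (m:ℝ)^2 * (ψ r) ^ 2 / r ^ 2) * r) (Set.Ioi (0:ℝ)))
    (lam mu : ℕ → ℝ) (hlam : ∀ n, 0 < lam n) (hmu : ∀ n, 0 < mu n)
    (horth : Tendsto (fun n => lam n / mu n + mu n / lam n) atTop atTop) :
    Tendsto (fun n => ∫ r in Set.Ioi (0:ℝ), |φ (r / lam n)| * |ψ (r / mu n)| / r)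
      atTop (nhds 0) :=
  cross_term_vanishes_orthogonal_scales' m hm φ ψ hφ hψ lam mu hlam hmu horth
end
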